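/- arXiv:1107.4130 — 5 statements merged into one kernel-verified Lean document; each statement's English description precedes it below -/
import Mathlib

section
/- G acts doubly transitively on ℤ/p ∪ {∞}: for any two ordered pairs of distinct points there is an element of G carrying the first pair to the second. -/
instance (X : Type*) [DecidableEq X] : DecidableEq (OnePoint X) :=
  inferInstanceAs (DecidableEq (Option X))

/-- The translation `z ↦ z + a` on `ℤ/p ∪ {∞}`, fixing `∞`. -/
def ptrans (p : ℕ) (a : ZMod p) : Equiv.Perm (OnePoint (ZMod p)) :=
  Equiv.optionCongr (Equiv.addRight a)

/-- The map `z ↦ a z` on `ℤ/p ∪ {∞}`, fixing `∞`, for `a ≠ 0`. -/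
def pmul (p : ℕ) [Fact p.Prime] (a : ZMod p) (ha : a ≠ 0) : Equiv.Perm (OnePoint (ZMod p)) :=
  Equiv.optionCongr (Equiv.mulLeft₀ a ha)

/-- Multiplication by `a` extended to `ℤ/p ∪ {∞}` (with `a·∞ = ∞`). -/
def opSmul (p : ℕ) (a : ZMod p) : OnePoint (ZMod p) → OnePoint (ZMod p) :=
  fun x => Option.map (fun z => a * z) x

/-- Underlying function of the map `z ↦ -1/z`. -/
def negInvFun (p : ℕ) : OnePoint (ZMod p) → OnePoint (ZMod p)
  | Option.none => Option.some (0 : ZMod p)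
  | Option.some z => if z = 0 then Option.none else Option.some (-z⁻¹ : ZMod p)

/-- The permutation `z ↦ -1/z` of `ℤ/p ∪ {∞}` (sending `0 ↦ ∞` and `∞ ↦ 0`). -/
def negInvPerm (p : ℕ) [Fact p.Prime] : Equiv.Perm (OnePoint (ZMod p)) :=
  Function.Involutive.toPerm (negInvFun p) (by
    intro x
    match x with
    | Option.none => simp [negInvFun] <;> rfl
    | Option.some z =>
      by_cases hz : z = 0
      · simp [negInvFun, hz] <;> rfl
      · have h1 : (-z⁻¹ : ZMod p) ≠ 0 := by simp [hz]
        simp [negInvFun, hz, h1, inv_neg, inv_inv] <;> rfl)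

/-- The involution `(0 ∞)(1 3)(2 6)(4 5)`. -/
def inv1 (p : ℕ) : Equiv.Perm (OnePoint (ZMod p)) :=
  Equiv.swap ((0 : ZMod p) : OnePoint (ZMod p)) OnePoint.infty *
  Equiv.swap ((1 : ZMod p) : OnePoint (ZMod p)) ((3 : ZMod p) : OnePoint (ZMod p)) *
  Equiv.swap ((2 : ZMod p) : OnePoint (ZMod p)) ((6 : ZMod p) : OnePoint (ZMod p)) *
  Equiv.swap ((4 : ZMod p) : OnePoint (ZMod p)) ((5 : ZMod p) : OnePoint (ZMod p))

/-- The involution `(0 ∞)(1 5)(2 3)(4 6)`. -/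
def inv2 (p : ℕ) : Equiv.Perm (OnePoint (ZMod p)) :=
  Equiv.swap ((0 : ZMod p) : OnePoint (ZMod p)) OnePoint.infty *
  Equiv.swap ((1 : ZMod p) : OnePoint (ZMod p)) ((5 : ZMod p) : OnePoint (ZMod p)) *
  Equiv.swap ((2 : ZMod p) : OnePoint (ZMod p)) ((3 : ZMod p) : OnePoint (ZMod p)) *
  Equiv.swap ((4 : ZMod p) : OnePoint (ZMod p)) ((6 : ZMod p) : OnePoint (ZMod p))

/-- The set of nonzero squares in `ℤ/p`. -/
def Rset (p : ℕ) : Set (ZMod p) := {a | a ≠ 0 ∧ IsSquare a}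

/-- The set of nonsquares in `(ℤ/p)*`. -/
def Nset (p : ℕ) : Set (ZMod p) := {a | a ≠ 0 ∧ ¬ IsSquare a}

theorem G_doubly_transitive
    (p : ℕ) [Fact p.Prime] (hp2 : p ≠ 2)
    (G : Subgroup (Equiv.Perm (OnePoint (ZMod p))))
    (htrans : ∀ x y : OnePoint (ZMod p), ∃ g ∈ G, g x = y)
    (hcard : Nat.card G = (p ^ 3 - p) / 2)
    (htransl : ∀ a : ZMod p, ptrans p a ∈ G) :
    ∀ x₁ x₂ y₁ y₂ : OnePoint (ZMod p), x₁ ≠ x₂ → y₁ ≠ y₂ →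
      ∃ g ∈ G, g x₁ = y₁ ∧ g x₂ = y₂ := by
  intro x₁ x₂ y₁ y₂ hx hy
  obtain ⟨g, hg, hgx⟩ := htrans x₂ OnePoint.infty
  obtain ⟨h, hh, hhy⟩ := htrans OnePoint.infty y₂
  have h1 : g x₁ ≠ OnePoint.infty := by
    rw [← hgx]; exact fun e => hx (g.injective e)
  have h2 : h⁻¹ y₁ ≠ OnePoint.infty := by
    intro e
    apply hy
    have : y₁ = h OnePoint.infty := by
      rw [← e]; simp
    rw [this, hhy]
  obtain ⟨a, ha⟩ := Option.ne_none_iff_exists'.mp h1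
  obtain ⟨b, hb⟩ := Option.ne_none_iff_exists'.mp h2
  refine ⟨h * ptrans p (b - a) * g, mul_mem (mul_mem hh (htransl _)) hg, ?_, ?_⟩
  · have : ptrans p (b - a) (g x₁) = h⁻¹ y₁ := by
      rw [ha, hb]
      show Option.map _ (some a) = some b
      rw [Option.map_some]
      simp
    simp only [Equiv.Perm.mul_apply, this]
    simp
  · simp only [Equiv.Perm.mul_apply, hgx]
    have : ptrans p (b - a) OnePoint.infty = OnePoint.infty := rfl
    rw [this, hhy]
end

section
/- No element of G other than the identity fixes more than 2 points of ℤ/p ∪ {∞}. -/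
set_option linter.unusedSectionVars false

namespace FixTwoAux

open MulAction Subgroup

variable (p : ℕ) [Fact p.Prime]

instance : Fintype (OnePoint (ZMod p)) := inferInstanceAs (Fintype (Option (ZMod p)))

lemma ptrans_none (a : ZMod p) : ptrans p a Option.none = Option.none := rfl
lemma ptrans_some (a z : ZMod p) : ptrans p a (Option.some z) = Option.some (z + a) := rfl

lemma ptrans_mul (a b : ZMod p) : ptrans p a * ptrans p b = ptrans p (a + b) := by
  ext x
  cases x with
  | infty => rfl
  | coe z =>
    show Option.some (z + b + a) = Option.some (z + (a + b))
    rw [add_assoc, add_comm b a]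

lemma ptrans_zero : ptrans p (0 : ZMod p) = 1 := by
  ext x; cases x with
  | infty => rfl
  | coe z => show Option.some (z + 0) = Option.some z; rw [add_zero]

lemma ptrans_inv (a : ZMod p) : (ptrans p a)⁻¹ = ptrans p (-a) :=
  (eq_inv_of_mul_eq_one_left (by rw [ptrans_mul, neg_add_cancel, ptrans_zero])).symm

/-- translations as a monoid hom from `Multiplicative (ZMod p)`. -/
def transHom : Multiplicative (ZMod p) →* Equiv.Perm (OnePoint (ZMod p)) where
  toFun a := ptrans p a.toAdd
  map_one' := ptrans_zero p
  map_mul' a b := by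
    show ptrans p (a.toAdd + b.toAdd) = ptrans p a.toAdd * ptrans p b.toAdd
    rw [ptrans_mul]

lemma ptrans_zpow (m : ℤ) : (ptrans p 1) ^ m = ptrans p (m : ZMod p) := by
  have h1 : ptrans p (1 : ZMod p) = transHom p (Multiplicative.ofAdd 1) := rfl
  rw [h1, ← map_zpow]
  show ptrans p (Multiplicative.toAdd (Multiplicative.ofAdd (1 : ZMod p) ^ m)) = _
  congr 1
  rw [← ofAdd_zsmul, toAdd_ofAdd, zsmul_eq_mul, mul_one]

lemma ptrans_npow (n : ℕ) : (ptrans p 1) ^ n = ptrans p (n : ZMod p) := by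
  have := ptrans_zpow p (n : ℤ)
  rw [zpow_natCast] at this
  rw [this]
  norm_cast

lemma orderOf_ptrans_one : orderOf (ptrans p (1 : ZMod p)) = p := by
  refine orderOf_eq_prime ?_ ?_
  · rw [ptrans_npow, ZMod.natCast_self, ptrans_zero]
  · intro h
    have := congrArg (fun σ : Equiv.Perm (OnePoint (ZMod p)) => σ (Option.some 0)) h
    simp only [ptrans_some, Equiv.Perm.one_apply] at this
    rw [zero_add] at this
    exact one_ne_zero (Option.some.inj this)

/-- Key lemma: an element of `G` fixing `∞`, `0` and a third point is the identity. -/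
lemma fix_three (hp2 : p ≠ 2)
    (G : Subgroup (Equiv.Perm (OnePoint (ZMod p))))
    (htrans : ∀ x y : OnePoint (ZMod p), ∃ g ∈ G, g x = y)
    (hcard : Nat.card G = (p ^ 3 - p) / 2)
    (htransl : ∀ a : ZMod p, ptrans p a ∈ G)
    (σ : Equiv.Perm (OnePoint (ZMod p))) (hσ : σ ∈ G)
    (hinf : σ OnePoint.infty = OnePoint.infty)
    (h0 : σ (Option.some (0 : ZMod p)) = Option.some 0)
    (w : ZMod p) (hw : w ≠ 0) (hfw : σ (Option.some w) = Option.some w) :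
    σ = 1 := by
  have hp : p.Prime := Fact.out
  have hp3 : 3 ≤ p := by
    have := hp.two_le
    omega
  obtain ⟨k, hm⟩ := hp.odd_of_ne_two hp2
  have hk0 : k ≠ 0 := by omega
  have hkp : k < p := by omega
  -- cardinality of the space
  have hcardX : Nat.card (OnePoint (ZMod p)) = p + 1 := by
    have h1 : Nat.card (OnePoint (ZMod p)) = Nat.card (Option (ZMod p)) := rfl
    rw [h1, Finite.card_option, Nat.card_zmod]
  -- the orbit of ∞ is everything
  have horb : MulAction.orbit ↥G (OnePoint.infty : OnePoint (ZMod p)) = Set.univ := by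
    refine Set.eq_univ_iff_forall.mpr fun y => ?_
    obtain ⟨g, hg, hgy⟩ := htrans OnePoint.infty y
    exact ⟨⟨g, hg⟩, hgy⟩
  set S := MulAction.stabilizer ↥G (OnePoint.infty : OnePoint (ZMod p)) with hSdef
  -- orbit-stabilizer
  haveI : Fintype ↥G := Fintype.ofFinite _
  haveI : Fintype ↥(MulAction.orbit ↥G (OnePoint.infty : OnePoint (ZMod p))) := Fintype.ofFinite _
  haveI : Fintype ↥S := Fintype.ofFinite _
  have hOS := MulAction.card_orbit_mul_card_stabilizer_eq_card_group ↥G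
      (OnePoint.infty : OnePoint (ZMod p))
  rw [← Nat.card_eq_fintype_card, ← Nat.card_eq_fintype_card, ← Nat.card_eq_fintype_card] at hOS
  have horbcard : Nat.card ↥(MulAction.orbit ↥G (OnePoint.infty : OnePoint (ZMod p))) = p + 1 := by
    rw [horb, Nat.card_univ, hcardX]
  rw [horbcard, hcard] at hOS
  -- compute (p^3 - p)/2 = (p+1) * (p * k)
  have hsub : p ^ 3 - p = (p + 1) * p * (2 * k) := by
    have h2 : p ^ 3 = (p + 1) * p * (2 * k) + p := by rw [hm]; ring
    exact Nat.sub_eq_of_eq_add h2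
  have hdiv : (p ^ 3 - p) / 2 = (p + 1) * (p * k) := by
    rw [hsub]
    have h3 : (p + 1) * p * (2 * k) = 2 * ((p + 1) * (p * k)) := by ring
    rw [h3, Nat.mul_div_cancel_left _ (by norm_num)]
  rw [hdiv] at hOS
  have hcardS : Nat.card ↥S = p * k :=
    Nat.eq_of_mul_eq_mul_left (by omega) hOS
  -- the translation by 1 as an element of the stabilizer S
  have ht1G : ptrans p 1 ∈ G := htransl 1
  have ht1stab : (⟨ptrans p 1, ht1G⟩ : ↥G) ∈ S := by
    show (⟨ptrans p 1, ht1G⟩ : ↥G) • (OnePoint.infty : OnePoint (ZMod p)) = OnePoint.infty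
    rfl
  set u : ↥S := ⟨⟨ptrans p 1, ht1G⟩, ht1stab⟩ with hudef
  have hordu : orderOf u = p := by
    have h1 : orderOf (S.subtype u) = orderOf u :=
      orderOf_injective S.subtype (subtype_injective S) u
    have h2 : orderOf (G.subtype (S.subtype u)) = orderOf (S.subtype u) :=
      orderOf_injective G.subtype (subtype_injective G) _
    have h3 : G.subtype (S.subtype u) = ptrans p 1 := rfl
    rw [← h1, ← h2, h3, orderOf_ptrans_one]
  set T : Subgroup ↥S := Subgroup.zpowers u with hTdef
  have hcardT : Nat.card ↥T = p := by rw [Nat.card_zpowers, hordu]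
  -- T is a Sylow p-subgroup of S
  have hndvd : ¬ p ∣ k := fun h => absurd (Nat.le_of_dvd (by omega) h) (by omega)
  have hfac : (Nat.card ↥S).factorization p = 1 := by
    rw [hcardS, Nat.factorization_mul hp.ne_zero hk0, Finsupp.add_apply,
      hp.factorization, Finsupp.single_eq_same, Nat.factorization_eq_zero_of_not_dvd hndvd]
  set P : Sylow p ↥S := Sylow.ofCard T (by rw [hcardT, hfac, pow_one]) with hPdef
  -- index of T in S is k
  have hTind : T.index = k := by
    have h4 := Subgroup.card_mul_index T
    rw [hcardT, hcardS] at h4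
    exact Nat.eq_of_mul_eq_mul_left hp.pos h4
  -- number of Sylow p-subgroups is 1
  have hn1 : Nat.card (Sylow p ↥S) = 1 := by
    have hdvd : Nat.card (Sylow p ↥S) ∣ T.index := Sylow.card_dvd_index P
    have hle : Nat.card (Sylow p ↥S) ≤ k := hTind ▸ Nat.le_of_dvd (by omega) hdvd
    have hmod : Nat.card (Sylow p ↥S) % p = 1 % p := card_sylow_modEq_one p ↥S
    have h5 : Nat.card (Sylow p ↥S) % p = Nat.card (Sylow p ↥S) :=
      Nat.mod_eq_of_lt (by omega)
    have h6 : 1 % p = 1 := Nat.mod_eq_of_lt (by omega)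
    omega
  haveI hsub1 : Subsingleton (Sylow p ↥S) := (Nat.card_eq_one_iff_unique.mp hn1).1
  -- σ as an element of S
  have hσstab : (⟨σ, hσ⟩ : ↥G) ∈ S := by
    show (⟨σ, hσ⟩ : ↥G) • (OnePoint.infty : OnePoint (ZMod p)) = OnePoint.infty
    exact hinf
  set s : ↥S := ⟨⟨σ, hσ⟩, hσstab⟩ with hsdef
  -- s normalizes T
  have hnorm : s ∈ Subgroup.normalizer (T : Set ↥S) := by
    have heq : s • P = P := Subsingleton.elim _ _
    exact Sylow.smul_eq_iff_mem_normalizer.mp heq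
  have humem : s * u * s⁻¹ ∈ T := by
    rw [Subgroup.mem_normalizer_iff] at hnorm
    exact (hnorm u).mp (Subgroup.mem_zpowers u)
  obtain ⟨m, hmeq⟩ := Subgroup.mem_zpowers_iff.mp humem
  -- push down to permutations
  have hψ : (ptrans p 1) ^ m = σ * ptrans p 1 * σ⁻¹ := by
    have := congrArg (fun x : ↥S => G.subtype (S.subtype x)) hmeq
    simp only [map_zpow, map_mul, map_inv] at this
    exact this
  set c : ZMod p := (m : ZMod p) with hcdef
  have hconj : ptrans p c = σ * ptrans p 1 * σ⁻¹ := by rw [← ptrans_zpow]; exact hψ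
  have happ : ∀ z : ZMod p, σ (Option.some (z + 1)) = ptrans p c (σ (Option.some z)) := by
    intro z
    have h7 := congrArg (fun τ : Equiv.Perm (OnePoint (ZMod p)) => τ (σ (Option.some z)))
      hconj
    have e : σ.symm (σ (Option.some z)) = Option.some z := σ.symm_apply_apply _
    simp only [Equiv.Perm.mul_apply, Equiv.Perm.inv_def, Equiv.symm_apply_apply] at h7
    simp only [e] at h7
    rw [h7]
    exact congrArg σ (ptrans_some p 1 z).symm
  have hnat : ∀ n : ℕ, σ (Option.some ((n : ZMod p))) = Option.some (c * n) := by
    intro n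
    induction n with
    | zero => simpa using h0
    | succ n ih =>
      have h8 : ((n + 1 : ℕ) : ZMod p) = (n : ZMod p) + 1 := by push_cast; ring
      rw [h8, happ, ih, ptrans_some]
      congr 1
      push_cast
      ring_nf
  have hall : ∀ z : ZMod p, σ (Option.some z) = Option.some (c * z) := by
    intro z
    obtain ⟨n, rfl⟩ := ZMod.natCast_zmod_surjective z
    exact hnat n
  have hc1 : c = 1 := by
    have h10 := hall w
    rw [hfw] at h10
    have h11 : w = c * w := Option.some.inj h10
    have h12 : (c - 1) * w = 0 := by rw [sub_mul, one_mul, ← h11]; ring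
    rcases mul_eq_zero.mp h12 with h13 | h13
    · exact sub_eq_zero.mp h13
    · exact absurd h13 hw
  ext x
  cases x with
  | infty => exact hinf
  | coe z =>
    show σ (Option.some z) = Option.some z
    rw [hall z, hc1, one_mul]

end FixTwoAux

theorem fixes_at_most_two
    (p : ℕ) [Fact p.Prime] (hp2 : p ≠ 2)
    (G : Subgroup (Equiv.Perm (OnePoint (ZMod p))))
    (htrans : ∀ x y : OnePoint (ZMod p), ∃ g ∈ G, g x = y)
    (hcard : Nat.card G = (p ^ 3 - p) / 2)
    (htransl : ∀ a : ZMod p, ptrans p a ∈ G) :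
    ∀ g ∈ G, g ≠ 1 → Set.ncard {x : OnePoint (ZMod p) | g x = x} ≤ 2 := by
  intro g hg hg1
  by_contra hcon
  push_neg at hcon
  obtain ⟨x, y, z, hx, hy, hz, hxy, hxz, hyz⟩ :=
    (Set.two_lt_ncard_iff (Set.toFinite _)).mp hcon
  simp only [Set.mem_setOf_eq] at hx hy hz
  -- move x to ∞
  obtain ⟨κ, hκG, hκx⟩ := htrans x OnePoint.infty
  set g₁ := κ * g * κ⁻¹ with hg₁def
  have hg₁G : g₁ ∈ G := G.mul_mem (G.mul_mem hκG hg) (G.inv_mem hκG)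
  have hκinv : κ⁻¹ OnePoint.infty = x := by rw [← hκx, Equiv.Perm.inv_def, Equiv.symm_apply_apply]
  have hg₁inf : g₁ OnePoint.infty = OnePoint.infty := by
    rw [hg₁def, Equiv.Perm.mul_apply, Equiv.Perm.mul_apply, hκinv, hx, hκx]
  have hfixκ : ∀ v : OnePoint (ZMod p), g v = v → g₁ (κ v) = κ v := by
    intro v hv
    rw [hg₁def, Equiv.Perm.mul_apply, Equiv.Perm.mul_apply, Equiv.Perm.inv_def, Equiv.symm_apply_apply, hv]
  have hκyne : κ y ≠ OnePoint.infty := by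
    intro h
    exact hxy (κ.injective (by rw [hκx, h])).symm
  have hκzne : κ z ≠ OnePoint.infty := by
    intro h
    exact hxz (κ.injective (by rw [hκx, h])).symm
  obtain ⟨b, hb⟩ : ∃ b : ZMod p, κ y = Option.some b := by
    cases hc : κ y with
    | infty => exact absurd hc hκyne
    | coe b => exact ⟨b, rfl⟩
  obtain ⟨w', hw'⟩ : ∃ w' : ZMod p, κ z = Option.some w' := by
    cases hc : κ z with
    | infty => exact absurd hc hκzne
    | coe b => exact ⟨b, rfl⟩
  have hbw : b ≠ w' := by
    intro h
    exact hyz (κ.injective (by rw [hb, hw', h]))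
  -- move b to 0
  set t := ptrans p (-b) with htdef
  have htinv : t⁻¹ = ptrans p b := by rw [htdef, FixTwoAux.ptrans_inv, neg_neg]
  set g₂ := t * g₁ * t⁻¹ with hg₂def
  have hg₂G : g₂ ∈ G := G.mul_mem (G.mul_mem (htransl (-b)) hg₁G) (G.inv_mem (htransl (-b)))
  have hg₂inf : g₂ OnePoint.infty = OnePoint.infty := by
    rw [hg₂def, Equiv.Perm.mul_apply, Equiv.Perm.mul_apply, htinv]
    show t (g₁ Option.none) = _
    have : g₁ Option.none = Option.none := hg₁inf
    rw [this]
    rfl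
  have hg₁b : g₁ (Option.some b) = Option.some b := by rw [← hb]; exact hfixκ y hy
  have hg₁w' : g₁ (Option.some w') = Option.some w' := by rw [← hw']; exact hfixκ z hz
  have hg₂0 : g₂ (Option.some (0 : ZMod p)) = Option.some 0 := by
    rw [hg₂def]
    show t (g₁ (t⁻¹ _)) = _
    rw [htinv, FixTwoAux.ptrans_some,
      zero_add, hg₁b, htdef, FixTwoAux.ptrans_some, add_neg_cancel]
  have hg₂w : g₂ (Option.some (w' - b)) = Option.some (w' - b) := by
    rw [hg₂def]
    show t (g₁ (t⁻¹ _)) = _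
    rw [htinv, FixTwoAux.ptrans_some,
      sub_add_cancel, hg₁w', htdef, FixTwoAux.ptrans_some, ← sub_eq_add_neg]
  have hwne : w' - b ≠ 0 := sub_ne_zero.mpr (Ne.symm hbw)
  have hg₂1 : g₂ = 1 :=
    FixTwoAux.fix_three p hp2 G htrans hcard htransl g₂ hg₂G hg₂inf hg₂0 (w' - b) hwne hg₂w
  have hg₁1 : g₁ = 1 := by
    have h1 : t * g₁ * t⁻¹ = 1 := hg₂1
    calc g₁ = t⁻¹ * (t * g₁ * t⁻¹) * t := by group
    _ = 1 := by rw [h1]; group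
  have : g = 1 := by
    have h2 : κ * g * κ⁻¹ = 1 := hg₁1
    calc g = κ⁻¹ * (κ * g * κ⁻¹) * κ := by group
    _ = 1 := by rw [h2]; group
  exact hg1 this
end

section
/- For every τ ∈ K̄ there exists an odd natural number n such that τ(a·z) = aⁿ · τ(z) for all z ∈ (ℤ/p)* and all a ∈ R, and (p − 1)/2 divides n² − 1. -/
set_option linter.unusedSectionVars false
set_option maxHeartbeats 1000000



namespace KbarAux
variable {p : ℕ} [Fact p.Prime]

def pmulu (p : ℕ) [Fact p.Prime] : (ZMod p)ˣ →* Equiv.Perm (OnePoint (ZMod p)) where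
  toFun u := Equiv.optionCongr (Equiv.mulLeft₀ (u : ZMod p) u.ne_zero)
  map_one' := Equiv.ext fun x => by
    match x with
    | Option.none => rfl
    | Option.some z =>
        show Option.some ((1 : ZMod p) * z) = Option.some z
        rw [one_mul]
  map_mul' u v := Equiv.ext fun x => by
    match x with
    | Option.none => rfl
    | Option.some z =>
        show Option.some (((u : ZMod p) * v) * z) = Option.some ((u : ZMod p) * ((v : ZMod p) * z))
        rw [mul_assoc]

lemma pmulu_coe (u : (ZMod p)ˣ) (z : ZMod p) :
    pmulu p u (z : OnePoint (ZMod p)) = (((u : ZMod p) * z : ZMod p) : OnePoint (ZMod p)) := rfl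

lemma pmulu_infty (u : (ZMod p)ˣ) : pmulu p u (OnePoint.infty) = OnePoint.infty := rfl

lemma pmulu_injective : Function.Injective (pmulu p) := by
  intro u v h
  have h2 := congrArg (fun e : Equiv.Perm (OnePoint (ZMod p)) => e ((1 : ZMod p) : OnePoint (ZMod p))) h
  simp only [pmulu_coe, mul_one] at h2
  exact Units.ext (OnePoint.coe_injective h2)

lemma ptrans_coe (a z : ZMod p) :
    ptrans p a (z : OnePoint (ZMod p)) = ((z + a : ZMod p) : OnePoint (ZMod p)) := rfl

lemma ptrans_infty (a : ZMod p) :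
    ptrans p a (OnePoint.infty : OnePoint (ZMod p)) = OnePoint.infty := rfl

lemma ptrans_mul (a b : ZMod p) : ptrans p a * ptrans p b = ptrans p (b + a) := by
  refine Equiv.ext fun x => ?_
  match x with
  | Option.none => rfl
  | Option.some z =>
      show Option.some ((z + b) + a) = Option.some (z + (b + a))
      rw [add_assoc]

lemma ptrans_injective : Function.Injective (ptrans p) := by
  intro a b h
  have h2 := congrArg
    (fun e : Equiv.Perm (OnePoint (ZMod p)) => e ((0 : ZMod p) : OnePoint (ZMod p))) h
  simp only [ptrans_coe, zero_add] at h2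
  exact OnePoint.coe_injective h2

lemma ptrans_zero : ptrans p (0 : ZMod p) = 1 := by
  refine Equiv.ext fun x => ?_
  match x with
  | Option.none => rfl
  | Option.some z =>
      show Option.some (z + 0) = Option.some z
      rw [add_zero]

lemma ptrans_pow (a : ZMod p) (k : ℕ) : (ptrans p a) ^ k = ptrans p ((k : ZMod p) * a) := by
  induction k with
  | zero => simp [ptrans_zero]
  | succ k ih =>
      rw [pow_succ, ih, ptrans_mul]
      push_cast
      ring_nf

lemma ptrans_inv (a : ZMod p) : (ptrans p a)⁻¹ = ptrans p (-a) := by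
  rw [inv_eq_iff_mul_eq_one, ptrans_mul, neg_add_cancel, ptrans_zero]

lemma orderOf_ptrans_one : orderOf (ptrans p (1 : ZMod p)) = p := by
  have h1 : (ptrans p (1 : ZMod p)) ^ p = 1 := by
    rw [ptrans_pow, ZMod.natCast_self, zero_mul, ptrans_zero]
  have h2 : ptrans p (1 : ZMod p) ≠ 1 := by
    intro h
    rw [← ptrans_zero] at h
    exact one_ne_zero (ptrans_injective h)
  exact orderOf_eq_prime h1 h2

theorem main_aux (p : ℕ) [Fact p.Prime] (hp2 : p ≠ 2)
    (G : Subgroup (Equiv.Perm (OnePoint (ZMod p))))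
    (htrans : ∀ x y : OnePoint (ZMod p), ∃ g ∈ G, g x = y)
    (hcard : Nat.card G = (p ^ 3 - p) / 2)
    (htransl : ∀ a : ZMod p, ptrans p a ∈ G) :
    (∀ g : Equiv.Perm (OnePoint (ZMod p)), g ∈ G →
      g OnePoint.infty = OnePoint.infty →
      g ((0 : ZMod p) : OnePoint (ZMod p)) = ((0 : ZMod p) : OnePoint (ZMod p)) →
      ∃ u : (ZMod p)ˣ, u ^ ((p - 1) / 2) = 1 ∧ g = pmulu p u) ∧
    (∀ u : (ZMod p)ˣ, u ^ ((p - 1) / 2) = 1 → pmulu p u ∈ G) := by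
  classical
  obtain ⟨m, hm⟩ := (Fact.out : p.Prime).odd_of_ne_two hp2
  have hp3 : 3 ≤ p := by have := (Fact.out : p.Prime).two_le; omega
  have hm2 : (p - 1) / 2 = m := by omega
  rw [hm2]
  have hG : Nat.card G = (p + 1) * (p * m) := by
    have h2 : p ≤ p ^ 3 := Nat.le_self_pow (by norm_num) p
    have h3 : p ^ 3 = 2 * ((p + 1) * (p * m)) + p := by rw [hm]; ring
    have h1 : p ^ 3 - p = 2 * ((p + 1) * (p * m)) := by omega
    rw [hcard, h1, Nat.mul_div_cancel_left _ (by norm_num)]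
  -- orbit of ∞ is everything
  have horb : MulAction.orbit G (OnePoint.infty : OnePoint (ZMod p)) = Set.univ := by
    refine Set.eq_univ_of_forall fun y => ?_
    obtain ⟨g, hg, hgy⟩ := htrans OnePoint.infty y
    exact ⟨⟨g, hg⟩, hgy⟩
  have hcardX : Nat.card (OnePoint (ZMod p)) = p + 1 := by
    have h0 : Nat.card (OnePoint (ZMod p)) = Nat.card (Option (ZMod p)) := rfl
    rw [h0, Nat.card_eq_fintype_card, Fintype.card_option, ZMod.card]
  have hOS := Nat.card_congr
    (MulAction.orbitProdStabilizerEquivGroup G (OnePoint.infty : OnePoint (ZMod p)))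
  rw [Nat.card_prod] at hOS
  have hcardOrb : Nat.card (MulAction.orbit G (OnePoint.infty : OnePoint (ZMod p))) = p + 1 := by
    rw [horb, Nat.card_congr (Equiv.Set.univ _)]
    exact hcardX
  have hcardS :
      Nat.card (MulAction.stabilizer G (OnePoint.infty : OnePoint (ZMod p))) = p * m := by
    refine Nat.eq_of_mul_eq_mul_left (show 0 < p + 1 by omega) ?_
    rw [← hG, ← hOS, hcardOrb]
  set S := MulAction.stabilizer G (OnePoint.infty : OnePoint (ZMod p)) with hSdef
  have hptS : ∀ a : ZMod p, (⟨ptrans p a, htransl a⟩ : G) ∈ S := by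
    intro a
    show _ • _ = _
    exact rfl
  -- second orbit-stabilizer
  have horb2 : MulAction.orbit S (((0 : ZMod p) : OnePoint (ZMod p)))
      = Set.range (fun z : ZMod p => (z : OnePoint (ZMod p))) := by
    ext y
    constructor
    · rintro ⟨g, rfl⟩
      have hg : ((g : G) : Equiv.Perm (OnePoint (ZMod p))) OnePoint.infty = OnePoint.infty := g.2
      have hne : (g : G).1 ((0 : ZMod p) : OnePoint (ZMod p)) ≠ OnePoint.infty := by
        intro h
        have := (g : G).1.injective (h.trans hg.symm)
        exact Option.some_ne_none _ this
      rcases hy : (g : G).1 ((0 : ZMod p) : OnePoint (ZMod p)) with _ | w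
      · exact absurd hy hne
      · exact ⟨w, hy.symm⟩
    · rintro ⟨z, rfl⟩
      refine ⟨⟨⟨ptrans p z, htransl z⟩, hptS z⟩, ?_⟩
      show ptrans p z ((0 : ZMod p) : OnePoint (ZMod p)) = _
      rw [ptrans_coe, zero_add]
  have hcardOrb2 : Nat.card (MulAction.orbit S (((0 : ZMod p) : OnePoint (ZMod p)))) = p := by
    rw [horb2, Nat.card_congr
      (Equiv.ofInjective _ (fun a b h => OnePoint.coe_injective h)).symm, Nat.card_zmod]
  have hOS2 := Nat.card_congr
    (MulAction.orbitProdStabilizerEquivGroup S (((0 : ZMod p) : OnePoint (ZMod p))))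
  rw [Nat.card_prod, hcardOrb2, hcardS] at hOS2
  have hcardS2 :
      Nat.card (MulAction.stabilizer S (((0 : ZMod p) : OnePoint (ZMod p)))) = m :=
    Nat.eq_of_mul_eq_mul_left (show 0 < p by omega) hOS2
  -- conjugates of the unit translation by elements fixing ∞ are translations
  have hconj : ∀ g : Equiv.Perm (OnePoint (ZMod p)), g ∈ G →
      g OnePoint.infty = OnePoint.infty →
      ∃ b : ZMod p, g * ptrans p 1 * g⁻¹ = ptrans p b := by
    intro g hgG hginf
    by_contra hcon
    push_neg at hcon
    set σ := g * ptrans p 1 * g⁻¹ with hσ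
    have hσG : σ ∈ G := mul_mem (mul_mem hgG (htransl 1)) (inv_mem hgG)
    have hginv : g⁻¹ OnePoint.infty = OnePoint.infty := by
      apply g.injective; rw [Equiv.Perm.inv_def, Equiv.apply_symm_apply, hginf]
    have hσinf : σ OnePoint.infty = OnePoint.infty := by
      show g (ptrans p 1 (g⁻¹ OnePoint.infty)) = OnePoint.infty
      rw [hginv, ptrans_infty, hginf]
    have hσord : orderOf σ = p := by
      have hp1 : (ptrans p (1 : ZMod p)) ^ p = 1 := by
        have h0 := pow_orderOf_eq_one (ptrans p (1 : ZMod p))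
        rwa [orderOf_ptrans_one] at h0
      have h1 : σ ^ p = 1 := by
        rw [hσ, conj_pow, hp1, mul_one, mul_inv_cancel]
      have h2 : σ ≠ 1 := by
        intro h
        have ht : ptrans p (1 : ZMod p) = g⁻¹ * σ * g := by rw [hσ]; group
        rw [h, mul_one, inv_mul_cancel, ← ptrans_zero] at ht
        exact one_ne_zero (ptrans_injective ht)
      exact orderOf_eq_prime h1 h2
    have hpow : ∀ i : ℕ, ¬ p ∣ i → ∀ b : ZMod p, σ ^ i ≠ ptrans p b := by
      intro i hi b hib
      have hi0 : (i : ZMod p) ≠ 0 := by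
        rwa [Ne, ZMod.natCast_eq_zero_iff]
      set mi := ((i : ZMod p)⁻¹).val with hmi
      have hmod : (i * mi : ℕ) ≡ 1 [MOD p] := by
        have hc : ((i * mi : ℕ) : ZMod p) = ((1 : ℕ) : ZMod p) := by
          push_cast
          rw [hmi, ZMod.natCast_val, ZMod.cast_id, mul_inv_cancel₀ hi0]
        exact (ZMod.natCast_eq_natCast_iff _ _ _).1 hc
      have him : σ ^ (i * mi) = σ := by
        calc σ ^ (i * mi) = σ ^ 1 := by
              rw [pow_eq_pow_iff_modEq, hσord]; exact hmod
          _ = σ := pow_one σ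
      rw [pow_mul, hib, ptrans_pow] at him
      exact hcon _ him.symm
    have hσS : (⟨σ, hσG⟩ : G) ∈ S := by
      show _ • _ = _
      exact hσinf
    have hinj : Function.Injective
        (fun ia : ZMod p × ZMod p =>
          ((⟨⟨σ, hσG⟩, hσS⟩ : S) ^ (ia.1.val)) *
            (⟨⟨ptrans p ia.2, htransl ia.2⟩, hptS ia.2⟩ : S)) := by
      rintro ⟨i, a⟩ ⟨j, a'⟩ h
      have h' : σ ^ i.val * ptrans p a = σ ^ j.val * ptrans p a' := by
        have h1 := congrArg (fun x : S => ((x : G) : Equiv.Perm (OnePoint (ZMod p)))) h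
        simpa using h1
      have hij : i = j := by
        by_contra hne
        have hvne : i.val ≠ j.val := fun hv => hne (ZMod.val_injective p hv)
        have hiv := ZMod.val_lt i
        have hjv := ZMod.val_lt j
        have hσp : σ ^ p = 1 := by
          have h0 := pow_orderOf_eq_one σ
          rwa [hσord] at h0
        have hp1 : σ ^ (p - j.val) * σ ^ j.val = 1 := by
          rw [← pow_add, Nat.sub_add_cancel (le_of_lt hjv)]
          exact hσp
        have e1 : σ ^ ((p - j.val) + i.val) * ptrans p a = ptrans p a' := by
          rw [pow_add, mul_assoc, h', ← mul_assoc, hp1, one_mul]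
        have e2 : σ ^ ((p - j.val) + i.val) = ptrans p a' * (ptrans p a)⁻¹ := by
          rw [← e1]; group
        rw [ptrans_inv, ptrans_mul] at e2
        refine hpow _ ?_ _ e2
        rintro ⟨k, hk⟩
        have hk2 : k < 2 := by
          by_contra hk2'
          push_neg at hk2'
          have h2p : 2 * p ≤ p * k := by
            calc 2 * p = p * 2 := by ring
              _ ≤ p * k := Nat.mul_le_mul_left _ hk2'
          omega
        interval_cases k <;> omega
      subst hij
      have ha : ptrans p a = ptrans p a' := by
        exact mul_left_cancel h'
      have := ptrans_injective ha
      simp [this]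
    have hle := Nat.card_le_card_of_injective _ hinj
    rw [Nat.card_prod, Nat.card_zmod, hcardS] at hle
    have hle2 : p ≤ m := Nat.le_of_mul_le_mul_left hle (by omega)
    omega
  -- part B : elements fixing ∞ and 0 are multiplications by units of order dividing m
  have keyB : ∀ g : Equiv.Perm (OnePoint (ZMod p)), g ∈ G →
      g OnePoint.infty = OnePoint.infty →
      g ((0 : ZMod p) : OnePoint (ZMod p)) = ((0 : ZMod p) : OnePoint (ZMod p)) →
      ∃ u : (ZMod p)ˣ, u ^ m = 1 ∧ g = pmulu p u := by
    intro g hgG hginf hg0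
    obtain ⟨b, hb⟩ := hconj g hgG hginf
    have hrec : ∀ k : ℕ, g ((k : ZMod p) : OnePoint (ZMod p))
        = (((k : ZMod p) * b : ZMod p) : OnePoint (ZMod p)) := by
      intro k
      induction k with
      | zero => push_cast; rw [zero_mul]; exact hg0
      | succ k ih =>
          have hcomm : g * ptrans p 1 = (g * ptrans p 1 * g⁻¹) * g := by group
          have happ := DFunLike.congr_fun hcomm ((k : ZMod p) : OnePoint (ZMod p))
          rw [hb] at happ
          simp only [Equiv.Perm.mul_apply] at happ
          rw [ptrans_coe, ih, ptrans_coe] at happ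
          push_cast
          rw [happ]
          congr 1
          ring
    have hgz : ∀ z : ZMod p, g (z : OnePoint (ZMod p)) = ((z * b : ZMod p) : OnePoint (ZMod p)) := by
      intro z
      have h1 := hrec z.val
      rwa [ZMod.natCast_zmod_val] at h1
    have hbne : b ≠ 0 := by
      intro h0
      have h1 := hgz 1
      rw [h0, mul_zero] at h1
      have h2 := g.injective (h1.trans hg0.symm)
      exact one_ne_zero (OnePoint.coe_injective h2)
    have hgeq : g = pmulu p (Units.mk0 b hbne) := by
      refine Equiv.ext fun x => ?_
      match x with
      | Option.none =>
          rw [show (Option.none : OnePoint (ZMod p)) = OnePoint.infty from rfl, hginf, pmulu_infty]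
      | Option.some z =>
          rw [show (Option.some z : OnePoint (ZMod p)) = (z : OnePoint (ZMod p)) from rfl,
            hgz z, pmulu_coe]
          rw [mul_comm]
          rfl
    refine ⟨Units.mk0 b hbne, ?_, hgeq⟩
    -- u ^ m = 1
    have hgS : (⟨g, hgG⟩ : G) ∈ S := hginf
    have hgS2 : (⟨⟨g, hgG⟩, hgS⟩ : S) ∈ MulAction.stabilizer S (((0 : ZMod p) : OnePoint (ZMod p))) := hg0
    have hpowc := pow_card_eq_one' (G := MulAction.stabilizer S (((0 : ZMod p) : OnePoint (ZMod p))))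
      (x := ⟨⟨⟨g, hgG⟩, hgS⟩, hgS2⟩)
    rw [hcardS2] at hpowc
    have hgm : g ^ m = 1 := by
      have h1 := congrArg
        (fun x : MulAction.stabilizer S (((0 : ZMod p) : OnePoint (ZMod p))) =>
          (((x : S) : G) : Equiv.Perm (OnePoint (ZMod p)))) hpowc
      simpa using h1
    rw [hgeq, ← map_pow] at hgm
    have : pmulu p (Units.mk0 b hbne ^ m) = pmulu p 1 := by rw [map_one]; exact hgm
    exact pmulu_injective this
  -- part A : every unit with u^m = 1 gives an element of G
  have hdecomp : ∀ h : MulAction.stabilizer S (((0 : ZMod p) : OnePoint (ZMod p))),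
      ∃ u : (ZMod p)ˣ, u ^ m = 1 ∧
        (((h : S) : G) : Equiv.Perm (OnePoint (ZMod p))) = pmulu p u := by
    intro h
    exact keyB _ ((h : S) : G).2 (h : S).2 h.2
  have hEcard : Nat.card {u : (ZMod p)ˣ // u ^ m = 1} ≤ m := by
    rw [Nat.card_eq_fintype_card, Fintype.card_subtype]
    have := IsCyclic.card_pow_eq_one_le (α := (ZMod p)ˣ) (n := m) (by omega)
    convert this using 2
  set ι : MulAction.stabilizer S (((0 : ZMod p) : OnePoint (ZMod p)))
      → {u : (ZMod p)ˣ // u ^ m = 1} :=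
    fun h => ⟨Classical.choose (hdecomp h), (Classical.choose_spec (hdecomp h)).1⟩ with hι
  have hι_spec : ∀ h : MulAction.stabilizer S (((0 : ZMod p) : OnePoint (ZMod p))),
      (((h : S) : G) : Equiv.Perm (OnePoint (ZMod p))) = pmulu p (ι h) :=
    fun h => (Classical.choose_spec (hdecomp h)).2
  have hι_inj : Function.Injective ι := by
    intro h h' hhh
    have h1 : (((h : S) : G) : Equiv.Perm (OnePoint (ZMod p)))
        = (((h' : S) : G) : Equiv.Perm (OnePoint (ZMod p))) := by
      rw [hι_spec h, hι_spec h', hhh]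
    exact Subtype.ext (Subtype.ext (Subtype.ext h1))
  have hι_bij : Function.Bijective ι := by
    rw [Fintype.bijective_iff_injective_and_card]
    refine ⟨hι_inj, ?_⟩
    have h1 := Nat.card_le_card_of_injective _ hι_inj
    rw [hcardS2] at h1
    rw [← Nat.card_eq_fintype_card, ← Nat.card_eq_fintype_card, hcardS2]
    omega
  constructor
  · exact keyB
  · intro u hu
    obtain ⟨h, hh⟩ := hι_bij.2 ⟨u, hu⟩
    have := hι_spec h
    rw [hh] at this
    rw [← this]
    exact (((h : S) : G)).2

end KbarAux

open KbarAux in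
theorem Kbar_conjugation_power
    (p : ℕ) [Fact p.Prime] (hp2 : p ≠ 2)
    (G : Subgroup (Equiv.Perm (OnePoint (ZMod p))))
    (htrans : ∀ x y : OnePoint (ZMod p), ∃ g ∈ G, g x = y)
    (hcard : Nat.card G = (p ^ 3 - p) / 2)
    (htransl : ∀ a : ZMod p, ptrans p a ∈ G)
    (τ : Equiv.Perm (OnePoint (ZMod p))) (hτG : τ ∈ G)
    (hτ0 : τ (OnePoint.some (0 : ZMod p)) = OnePoint.infty)
    (hτinf : τ OnePoint.infty = OnePoint.some (0 : ZMod p)) :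
    ∃ n : ℕ, Odd n ∧
      (∀ a ∈ Rset p, ∀ z : ZMod p, z ≠ 0 →
        τ (OnePoint.some (a * z)) = opSmul p (a ^ n) (τ (OnePoint.some z))) ∧
      (p - 1) / 2 ∣ n ^ 2 - 1 := by
  classical
  obtain ⟨keyB, keyA⟩ := KbarAux.main_aux p hp2 G htrans hcard htransl
  obtain ⟨m, hm⟩ := (Fact.out : p.Prime).odd_of_ne_two hp2
  have hp3 : 3 ≤ p := by have := (Fact.out : p.Prime).two_le; omega
  have hm2 : (p - 1) / 2 = m := by omega
  have hpdiv2 : p / 2 = m := by omega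
  rw [hm2] at keyB keyA
  have hτ0' : τ ((0 : ZMod p) : OnePoint (ZMod p)) = OnePoint.infty := hτ0
  have hτinf' : τ OnePoint.infty = ((0 : ZMod p) : OnePoint (ZMod p)) := hτinf
  -- τ² fixes 0 and ∞
  have hτ2G : τ * τ ∈ G := mul_mem hτG hτG
  have hτ2inf : (τ * τ) OnePoint.infty = OnePoint.infty := by
    show τ (τ OnePoint.infty) = _
    rw [hτinf', hτ0']
  have hτ20 : (τ * τ) ((0 : ZMod p) : OnePoint (ZMod p)) = ((0 : ZMod p) : OnePoint (ZMod p)) := by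
    show τ (τ _) = _
    rw [hτ0', hτinf']
  obtain ⟨u₀, hu₀m, hu₀⟩ := keyB _ hτ2G hτ2inf hτ20
  -- generator of the group of units
  obtain ⟨g0, hg0⟩ := IsCyclic.exists_generator (α := (ZMod p)ˣ)
  have hcardU : Nat.card (ZMod p)ˣ = 2 * m := by
    rw [Nat.card_eq_fintype_card, ZMod.card_units]
    omega
  have hordg0 : orderOf g0 = 2 * m := by
    rw [orderOf_eq_card_of_forall_mem_zpowers hg0]
    exact hcardU
  set w := g0 ^ 2 with hw
  have hordw : orderOf w = m := by
    rw [hw, orderOf_pow, hordg0, Nat.gcd_eq_right ⟨m, rfl⟩]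
    omega
  have hwm : w ^ m = 1 := by
    have h0 := pow_orderOf_eq_one w
    rwa [hordw] at h0
  have hwgen : ∀ u : (ZMod p)ˣ, u ^ m = 1 → ∃ k : ℕ, w ^ k = u := by
    intro u hu
    obtain ⟨k, hk⟩ := (Submonoid.mem_powers_iff _ _).1
      ((isOfFinOrder_of_finite g0).mem_powers_iff_mem_zpowers.2 (hg0 u))
    have h2 : (2 * m) ∣ k * m := by
      have h3 : g0 ^ (k * m) = 1 := by rw [pow_mul, hk, hu]
      rw [← hordg0]
      exact orderOf_dvd_of_pow_eq_one h3
    obtain ⟨t, ht⟩ := h2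
    have hm0 : 0 < m := by omega
    have hkt : k = 2 * t := by
      refine Nat.eq_of_mul_eq_mul_right hm0 ?_
      rw [ht]; ring
    refine ⟨t, ?_⟩
    rw [hw, ← pow_mul, show 2 * t = k from hkt.symm, hk]
  -- conjugation by τ preserves the multiplications
  have hconj : ∀ u : (ZMod p)ˣ, u ^ m = 1 →
      ∃ v : (ZMod p)ˣ, v ^ m = 1 ∧ τ * pmulu p u * τ⁻¹ = pmulu p v := by
    intro u hu
    have hmem : pmulu p u ∈ G := keyA u hu
    have hcmem : τ * pmulu p u * τ⁻¹ ∈ G := mul_mem (mul_mem hτG hmem) (inv_mem hτG)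
    have hτinv0 : τ⁻¹ OnePoint.infty = ((0 : ZMod p) : OnePoint (ZMod p)) := by
      apply τ.injective; rw [Equiv.Perm.inv_def, Equiv.apply_symm_apply, hτ0']
    have hτinvinf : τ⁻¹ ((0 : ZMod p) : OnePoint (ZMod p)) = OnePoint.infty := by
      apply τ.injective; rw [Equiv.Perm.inv_def, Equiv.apply_symm_apply, hτinf']
    have h1 : (τ * pmulu p u * τ⁻¹) OnePoint.infty = OnePoint.infty := by
      show τ (pmulu p u (τ⁻¹ OnePoint.infty)) = _
      rw [hτinv0, pmulu_coe, mul_zero, hτ0']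
    have h2 : (τ * pmulu p u * τ⁻¹) ((0 : ZMod p) : OnePoint (ZMod p))
        = ((0 : ZMod p) : OnePoint (ZMod p)) := by
      show τ (pmulu p u (τ⁻¹ _)) = _
      rw [hτinvinf, pmulu_infty, hτinf']
    exact keyB _ hcmem h1 h2
  obtain ⟨c, hcm, hc⟩ := hconj w hwm
  obtain ⟨n, hn⟩ := hwgen c hcm
  have e0 : τ * pmulu p w * τ⁻¹ = pmulu p (w ^ n) := by rw [hn]; exact hc
  have hconjk : ∀ k : ℕ, τ * pmulu p (w ^ k) * τ⁻¹ = pmulu p ((w ^ k) ^ n) := by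
    intro k
    calc τ * pmulu p (w ^ k) * τ⁻¹ = τ * (pmulu p w) ^ k * τ⁻¹ := by rw [map_pow]
      _ = (τ * pmulu p w * τ⁻¹) ^ k := conj_pow.symm
      _ = (pmulu p (w ^ n)) ^ k := by rw [e0]
      _ = pmulu p ((w ^ k) ^ n) := by rw [← map_pow, pow_right_comm]
  -- n² acts trivially
  have hns : w ^ (n * n) = w := by
    have e1 : τ * (τ * pmulu p w * τ⁻¹) * τ⁻¹ = pmulu p ((w ^ n) ^ n) := by
      rw [e0]
      exact hconjk n
    have e2 : τ * (τ * pmulu p w * τ⁻¹) * τ⁻¹ = (τ * τ) * pmulu p w * (τ * τ)⁻¹ := by group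
    have e3 : (τ * τ) * pmulu p w * (τ * τ)⁻¹ = pmulu p w := by
      rw [hu₀, ← map_mul, ← map_inv, ← map_mul]
      congr 1
      rw [mul_comm u₀ w, mul_assoc, mul_inv_cancel, mul_one]
    have e4 : pmulu p ((w ^ n) ^ n) = pmulu p w := by rw [← e1, e2, e3]
    have e5 := pmulu_injective e4
    rwa [← pow_mul] at e5
  have hmod : n * n ≡ 1 [MOD m] := by
    have h1 : w ^ (n * n) = w ^ 1 := by rw [pow_one]; exact hns
    have h2 := (pow_eq_pow_iff_modEq).1 h1
    rwa [hordw] at h2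
  -- gcd m n = 1
  have hgcd : Nat.gcd m n = 1 := by
    have hd1 : Nat.gcd m n ∣ n * n := Dvd.dvd.mul_left (Nat.gcd_dvd_right m n) n
    have hd2 : n * n ≡ 1 [MOD Nat.gcd m n] := hmod.of_dvd (Nat.gcd_dvd_left m n)
    have hd3 : n * n ≡ 0 [MOD Nat.gcd m n] := (Nat.modEq_zero_iff_dvd).2 hd1
    have hd4 : (1 : ℕ) ≡ 0 [MOD Nat.gcd m n] := hd2.symm.trans hd3
    have hd5 : Nat.gcd m n ∣ 1 := (Nat.modEq_zero_iff_dvd).1 hd4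
    exact Nat.dvd_one.1 hd5
  set N := if Odd n then n else n + m with hN
  have hNodd : Odd N := by
    by_cases ho : Odd n
    · rw [hN, if_pos ho]; exact ho
    · rw [hN, if_neg ho]
      have hne : Even n := Nat.not_odd_iff_even.1 ho
      have hmodd : Odd m := by
        by_contra hmo
        have hme : Even m := Nat.not_odd_iff_even.1 hmo
        have h2 : 2 ∣ Nat.gcd m n := Nat.dvd_gcd hme.two_dvd hne.two_dvd
        rw [hgcd] at h2
        omega
      exact hne.add_odd hmodd
  have hNmod : N ≡ n [MOD m] := by
    by_cases ho : Odd n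
    · rw [hN, if_pos ho]
    · rw [hN, if_neg ho]
      have h1 : n ≤ n + m := Nat.le_add_right n m
      refine ((Nat.modEq_iff_dvd' h1).2 ?_).symm
      simp
  have haN : ∀ a : ZMod p, a ^ m = 1 → a ^ N = a ^ n := by
    intro a ham
    by_cases ho : Odd n
    · rw [hN, if_pos ho]
    · rw [hN, if_neg ho, pow_add, ham, mul_one]
  refine ⟨N, hNodd, ?_, ?_⟩
  · intro a ha z hz
    obtain ⟨ha0, hasq⟩ := ha
    have ham : a ^ m = 1 := by
      have h1 := (ZMod.euler_criterion p ha0).1 hasq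
      rwa [hpdiv2] at h1
    have hum : (Units.mk0 a ha0) ^ m = 1 := by
      apply Units.ext
      rw [Units.val_pow_eq_pow_val, Units.val_mk0, Units.val_one]
      exact ham
    obtain ⟨k, hk⟩ := hwgen _ hum
    have hcu : τ * pmulu p (Units.mk0 a ha0) * τ⁻¹ = pmulu p ((Units.mk0 a ha0) ^ n) := by
      rw [← hk]
      exact hconjk k
    have hcu2 : τ * pmulu p (Units.mk0 a ha0) = pmulu p ((Units.mk0 a ha0) ^ n) * τ := by
      rw [← hcu]; group
    have happ := DFunLike.congr_fun hcu2 (OnePoint.some z)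
    simp only [Equiv.Perm.mul_apply] at happ
    have hl : pmulu p (Units.mk0 a ha0) (OnePoint.some z) = OnePoint.some (a * z) := rfl
    rw [hl] at happ
    rw [happ]
    have hval : ((Units.mk0 a ha0 ^ n : (ZMod p)ˣ) : ZMod p) = a ^ N := by
      rw [Units.val_pow_eq_pow_val, Units.val_mk0, haN a ham]
    match hty : τ (OnePoint.some z) with
    | Option.none => rfl
    | Option.some y =>
        show Option.some (((Units.mk0 a ha0 ^ n : (ZMod p)ˣ) : ZMod p) * y)
          = Option.some (a ^ N * y)
        rw [hval]
  · rw [hm2, pow_two]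
    have h1 : N * N ≡ 1 [MOD m] := (hNmod.mul hNmod).trans hmod
    have hN0 : N ≠ 0 := by
      intro h0
      rw [h0] at hNodd
      simp [Nat.odd_iff] at hNodd
    have h2 : 1 ≤ N * N := Nat.one_le_iff_ne_zero.2 (Nat.mul_ne_zero hN0 hN0)
    exact (Nat.modEq_iff_dvd' h2).1 h1.symm
end

section
/- Assume p ≡ 1 (mod 4). Then there exist λ ∈ K̄ and c ∈ (ℤ/p)* such that λ(z) = z⁻¹ for all z ∈ R and λ(z) = c·z⁻¹ for all z ∈ N. -/
set_option linter.unusedSectionVars false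
namespace ELI
open Equiv OnePoint MulAction

variable {p : ℕ} [Fact p.Prime]

lemma ptrans_some (a z : ZMod p) : ptrans p a (OnePoint.some z) = OnePoint.some (z + a) := rfl
lemma ptrans_infty (a : ZMod p) : ptrans p a OnePoint.infty = OnePoint.infty := rfl

lemma ptrans_mul (a b : ZMod p) : ptrans p a * ptrans p b = ptrans p (a + b) := by
  ext x
  cases x with
  | infty => rfl
  | coe z => show OnePoint.some (z + b + a) = OnePoint.some (z + (a+b)); rw [add_assoc, add_comm b a]

lemma ptrans_zero : ptrans p 0 = 1 := by
  ext x; cases x with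
  | infty => rfl
  | coe z => show OnePoint.some (z+0) = OnePoint.some z; rw [add_zero]

lemma ptrans_pow (n : ℕ) : (ptrans p 1) ^ n = ptrans p (n : ZMod p) := by
  induction n with
  | zero => simpa using ptrans_zero.symm
  | succ k ih => rw [pow_succ, ih, ptrans_mul]; push_cast; ring_nf

lemma ptrans_inv (a : ZMod p) : (ptrans p a)⁻¹ = ptrans p (-a) := by
  apply inv_eq_of_mul_eq_one_right
  rw [ptrans_mul]; simpa using ptrans_zero

lemma ptrans_zpow (n : ℤ) : (ptrans p 1) ^ n = ptrans p (n : ZMod p) := by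
  cases n with
  | ofNat k => rw [Int.ofNat_eq_coe, zpow_natCast, ptrans_pow]; push_cast; rfl
  | negSucc k =>
    rw [zpow_negSucc, ptrans_pow, ptrans_inv]
    congr 1
    push_cast
    ring

lemma ptrans_inj {a b : ZMod p} (h : ptrans p a = ptrans p b) : a = b := by
  have := congrArg (fun g : Equiv.Perm (OnePoint (ZMod p)) => g (OnePoint.some 0)) h
  simp only [ptrans_some] at this
  simpa using this

lemma orderOf_ptrans_one : orderOf (ptrans p (1 : ZMod p)) = p := by
  refine orderOf_eq_prime ?_ ?_
  · rw [ptrans_pow]; simpa using ptrans_zero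
  · intro h
    have : (1 : ZMod p) = 0 := ptrans_inj (by simpa [ptrans_zero] using h)
    exact one_ne_zero this

variable (G : Subgroup (Equiv.Perm (OnePoint (ZMod p))))

/-- The subgroup of `G` fixing `∞`. -/
def Gfix : Subgroup (Equiv.Perm (OnePoint (ZMod p))) where
  carrier := {g | g ∈ G ∧ g OnePoint.infty = OnePoint.infty}
  one_mem' := ⟨G.one_mem, rfl⟩
  mul_mem' := fun {a b} ha hb => ⟨G.mul_mem ha.1 hb.1, by
    rw [Equiv.Perm.mul_apply, hb.2, ha.2]⟩
  inv_mem' := fun {a} ha => ⟨G.inv_mem ha.1, by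
    conv_lhs => rw [← ha.2]
    exact a.symm_apply_apply _⟩

lemma mem_Gfix_iff {g : Equiv.Perm (OnePoint (ZMod p))} :
    g ∈ Gfix G ↔ g ∈ G ∧ g OnePoint.infty = OnePoint.infty := Iff.rfl

variable {G}

lemma p5 (hp2 : p ≠ 2) (hp1 : p % 4 = 1) : 5 ≤ p := by
  have := (Fact.out : p.Prime).two_le
  omega

lemma cardX : Nat.card (OnePoint (ZMod p)) = p + 1 := by
  have : Nat.card (Option (ZMod p)) = p + 1 := by
    simp [Nat.card_eq_fintype_card, ZMod.card]
  exact this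

variable {G : Subgroup (Equiv.Perm (OnePoint (ZMod p)))}

lemma cardG' (hp2 : p ≠ 2) (hcard : Nat.card G = (p ^ 3 - p) / 2) :
    Nat.card G = (p + 1) * (p * ((p - 1) / 2)) := by
  have hp := (Fact.out : p.Prime)
  have h2 : p % 2 = 1 := Nat.odd_iff.mp (hp.odd_of_ne_two hp2)
  have h3 : p ^ 3 - p = (p + 1) * (p * (p - 1)) := by
    have h1 : 1 ≤ p := hp.one_le
    have hub : p ≤ p ^ 3 := Nat.le_self_pow (by norm_num) p
    zify [h1, hub]; ring
  obtain ⟨k, hk⟩ : ∃ k, p - 1 = 2 * k := ⟨(p-1)/2, by omega⟩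
  have hk2 : (p - 1) / 2 = k := by omega
  rw [hcard, h3, hk]
  have h4 : (p+1) * (p * (2*k)) = 2 * ((p+1)*(p*k)) := by ring
  rw [h4, Nat.mul_div_cancel_left _ (by norm_num), Nat.mul_div_cancel_left _ (by norm_num : 0 < 2)]

lemma card_stab_infty (htrans : ∀ x y : OnePoint (ZMod p), ∃ g ∈ G, g x = y)
    (hp2 : p ≠ 2) (hcard : Nat.card G = (p ^ 3 - p) / 2) :
    Nat.card {g : Equiv.Perm (OnePoint (ZMod p)) // g ∈ G ∧ g OnePoint.infty = OnePoint.infty}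
      = p * ((p - 1) / 2) := by
  classical
  have horb : (orbit G (OnePoint.infty : OnePoint (ZMod p))) = Set.univ := by
    rw [Set.eq_univ_iff_forall]
    intro y
    obtain ⟨g, hg, hgy⟩ := htrans OnePoint.infty y
    exact ⟨⟨g, hg⟩, hgy⟩
  have hos : Nat.card (orbit G (OnePoint.infty : OnePoint (ZMod p))) * Nat.card (stabilizer G (OnePoint.infty : OnePoint (ZMod p)))
      = Nat.card G := by
    simp only [Nat.card_eq_fintype_card]
    exact card_orbit_mul_card_stabilizer_eq_card_group G OnePoint.infty
  have horbc : Nat.card (orbit G (OnePoint.infty : OnePoint (ZMod p))) = p + 1 := by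
    rw [horb, Nat.card_eq_fintype_card]
    rw [Fintype.card_congr (Equiv.Set.univ _)]
    show Fintype.card (Option (ZMod p)) = p + 1
    simp [ZMod.card]
  have he : {g : Equiv.Perm (OnePoint (ZMod p)) // g ∈ G ∧ g OnePoint.infty = OnePoint.infty}
      ≃ stabilizer G (OnePoint.infty : OnePoint (ZMod p)) :=
    { toFun := fun x => ⟨⟨x.1, x.2.1⟩, x.2.2⟩
      invFun := fun x => ⟨x.1.1, x.1.2, x.2⟩
      left_inv := fun x => rfl
      right_inv := fun x => rfl }
  rw [Nat.card_congr he]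
  have := cardG' hp2 hcard
  rw [this, horbc] at hos
  exact Nat.eq_of_mul_eq_mul_left (by omega) hos



lemma card_Gfix (htrans : ∀ x y : OnePoint (ZMod p), ∃ g ∈ G, g x = y)
    (hp2 : p ≠ 2) (hcard : Nat.card G = (p ^ 3 - p) / 2)
    (hstab : Nat.card {g : Equiv.Perm (OnePoint (ZMod p)) // g ∈ G ∧ g OnePoint.infty = OnePoint.infty}
      = p * ((p - 1) / 2)) :
    Nat.card (Gfix G) = p * ((p - 1) / 2) := hstab

lemma conj_ptrans (hp2 : p ≠ 2) (hp1 : p % 4 = 1)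
    (htransl : ∀ a : ZMod p, ptrans p a ∈ G)
    (hGfixcard : Nat.card (Gfix G) = p * ((p - 1) / 2))
    {g : Equiv.Perm (OnePoint (ZMod p))} (hg : g ∈ G) (hfix : g OnePoint.infty = OnePoint.infty) :
    ∃ c : ZMod p, c ≠ 0 ∧ g * ptrans p 1 * g⁻¹ = ptrans p c := by
  classical
  have hp5 : 5 ≤ p := by have := (Fact.out : p.Prime).two_le; omega
  set m := (p - 1) / 2 with hm
  have hm0 : m ≠ 0 := by omega
  have hmp : m < p := by omega
  -- the translation subgroup inside Gfix
  set tra : Gfix G := ⟨ptrans p 1, htransl 1, rfl⟩ with htra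
  set T : Subgroup (Gfix G) := Subgroup.zpowers tra with hT
  have horder : orderOf tra = p := by
    have h1 : orderOf ((Gfix G).subtype tra) = orderOf tra :=
      orderOf_injective _ (Gfix G).subtype_injective tra
    have h2 : (Gfix G).subtype tra = ptrans p 1 := rfl
    rw [h2] at h1
    rw [← h1, orderOf_ptrans_one]
  have hcardT : Nat.card T = p := by rw [hT, Nat.card_zpowers, horder]
  have hfact : (Nat.card (Gfix G)).factorization p = 1 := by
    rw [hGfixcard, Nat.factorization_mul (by omega) hm0]
    have h1 : p.factorization p = 1 := (Fact.out : p.Prime).factorization_self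
    have h2 : (m).factorization p = 0 := by
      apply Nat.factorization_eq_zero_of_not_dvd
      intro hdvd
      exact absurd (Nat.le_of_dvd (by omega) hdvd) (by omega)
    simp [h1, h2]
  have hcardT' : Nat.card T = p ^ (Nat.card (Gfix G)).factorization p := by
    rw [hfact, pow_one, hcardT]
  set P : Sylow p (Gfix G) := Sylow.ofCard T hcardT'
  -- number of Sylow p-subgroups is 1
  have hnum : Nat.card (Sylow p (Gfix G)) = 1 := by
    have hmod := card_sylow_modEq_one p (Gfix G)
    have hdvd := Sylow.card_dvd_index P
    have hindex : (P : Subgroup (Gfix G)).index = m := by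
      have h1 := Subgroup.card_mul_index (P : Subgroup (Gfix G))
      rw [Sylow.coe_ofCard, hcardT, hGfixcard] at h1
      exact Nat.eq_of_mul_eq_mul_left (by omega) h1
    rw [hindex] at hdvd
    have h1 : Nat.card (Sylow p (Gfix G)) ≤ m := Nat.le_of_dvd (by omega) hdvd
    have h2 : Nat.card (Sylow p (Gfix G)) % p = 1 % p := hmod
    have h3 : 0 < Nat.card (Sylow p (Gfix G)) := Nat.card_pos
    have h4 : Nat.card (Sylow p (Gfix G)) < p := lt_of_le_of_lt h1 hmp
    have h5 := Nat.mod_eq_of_lt h4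
    have h6 : 1 % p = 1 := Nat.mod_eq_of_lt (by omega)
    omega
  haveI hsub : Subsingleton (Sylow p (Gfix G)) :=
    (Nat.card_eq_one_iff_unique.mp hnum).1
  -- conjugate of T by g is T
  set ghat : Gfix G := ⟨g, hg, hfix⟩ with hghat
  set f := (MulAut.conj ghat).toMonoidHom with hf
  set T' : Subgroup (Gfix G) := Subgroup.map f T with hT'
  have hcardT2 : Nat.card T' = p ^ (Nat.card (Gfix G)).factorization p := by
    rw [hT', ← hcardT']
    exact (Nat.card_congr (Subgroup.equivMapOfInjective T f (MulAut.conj ghat).injective).toEquiv).symm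
  set P' : Sylow p (Gfix G) := Sylow.ofCard T' hcardT2
  have hPP : P' = P := Subsingleton.elim _ _
  have hTT : T' = T := by
    have h1 : (P' : Subgroup (Gfix G)) = T' := Sylow.coe_ofCard _ _
    have h2 : (P : Subgroup (Gfix G)) = T := Sylow.coe_ofCard _ _
    rw [← h1, hPP, h2]
  -- extract the conjugation equation
  have hmem : f tra ∈ T' := Subgroup.mem_map_of_mem f (Subgroup.mem_zpowers tra)
  rw [hTT, hT] at hmem
  obtain ⟨n, hn⟩ := Subgroup.mem_zpowers_iff.mp hmem
  -- coerce to Perm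
  have hn' : (ptrans p 1) ^ n = g * ptrans p 1 * g⁻¹ := by
    have := congrArg (Subtype.val) hn
    push_cast at this
    convert this using 1
    rfl
  refine ⟨(n : ZMod p), ?_, ?_⟩
  · intro hc
    rw [ptrans_zpow, hc, ptrans_zero] at hn'
    have : ptrans p 1 = 1 := by
      have h2 := congrArg (fun x => g⁻¹ * x * g) hn'
      simp at h2
      group at h2
      simpa using h2.symm
    have h9 : ptrans p (1 : ZMod p) = ptrans p 0 := by rw [ptrans_zero]; exact this
    exact one_ne_zero (ptrans_inj h9)
  · rw [← ptrans_zpow, hn']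


lemma affine_of_fix (hp2 : p ≠ 2) (hp1 : p % 4 = 1)
    (htransl : ∀ a : ZMod p, ptrans p a ∈ G)
    (hGfixcard : Nat.card (Gfix G) = p * ((p - 1) / 2))
    {g : Equiv.Perm (OnePoint (ZMod p))} (hg : g ∈ G) (hfix : g OnePoint.infty = OnePoint.infty) :
    ∃ c b : ZMod p, c ≠ 0 ∧ ∀ z : ZMod p, g (OnePoint.some z) = OnePoint.some (c * z + b) := by
  obtain ⟨c, hc0, hconj⟩ := conj_ptrans hp2 hp1 htransl hGfixcard hg hfix
  have hkey : g * ptrans p 1 = ptrans p c * g := by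
    have := congrArg (fun x => x * g) hconj
    simpa [mul_assoc] using this
  -- g (some 0) is finite
  obtain ⟨b, hb⟩ : ∃ b : ZMod p, g (OnePoint.some 0) = OnePoint.some b := by
    cases h : g (OnePoint.some 0) with
    | infty =>
      exfalso
      have : g (OnePoint.some 0) = g OnePoint.infty := by rw [h, hfix]
      exact Option.some_ne_none _ (g.injective this)
    | coe b => exact ⟨b, rfl⟩
  refine ⟨c, b, hc0, ?_⟩
  have hnat : ∀ n : ℕ, g (OnePoint.some (n : ZMod p)) = OnePoint.some (c * n + b) := by
    intro n
    induction n with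
    | zero => simpa using hb
    | succ k ih =>
      have h1 : OnePoint.some ((k + 1 : ℕ) : ZMod p) = ptrans p 1 (OnePoint.some (k : ZMod p)) := by
        rw [ptrans_some]; push_cast; ring_nf
      rw [h1, ← Equiv.Perm.mul_apply, hkey, Equiv.Perm.mul_apply, ih, ptrans_some]
      congr 1
      push_cast
      ring
  intro z
  have := hnat z.val
  rwa [ZMod.natCast_val, ZMod.cast_id] at this

lemma unique_aff {g : Equiv.Perm (OnePoint (ZMod p))} {c b c' b' : ZMod p}
    (h : ∀ z : ZMod p, g (OnePoint.some z) = OnePoint.some (c * z + b))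
    (h' : ∀ z : ZMod p, g (OnePoint.some z) = OnePoint.some (c' * z + b')) :
    c = c' ∧ b = b' := by
  have h0 := (h 0).symm.trans (h' 0)
  have h1 := (h 1).symm.trans (h' 1)
  rw [OnePoint.some_eq_iff] at h0 h1
  simp only [mul_zero, zero_add, mul_one] at h0 h1
  constructor
  · have := h1
    rw [h0] at this
    linear_combination this
  · exact h0

lemma structure_Gfix (hp2 : p ≠ 2) (hp1 : p % 4 = 1)
    (htransl : ∀ a : ZMod p, ptrans p a ∈ G)
    (hGfixcard : Nat.card (Gfix G) = p * ((p - 1) / 2)) :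
    (∀ g ∈ G, g OnePoint.infty = OnePoint.infty → ∀ c b : ZMod p,
        (∀ z : ZMod p, g (OnePoint.some z) = OnePoint.some (c * z + b)) → IsSquare c) ∧
    (∀ c b : ZMod p, ∀ hc : c ≠ 0, IsSquare c → (ptrans p b * pmul p c hc) ∈ G) ∧
    Nat.card (Rset p) = (p - 1) / 2 := by
  classical
  have hp5 : 5 ≤ p := by have := (Fact.out : p.Prime).two_le; omega
  set m := (p - 1) / 2 with hm
  -- the multiplier function on Gfix
  have haff : ∀ g : Gfix G, ∃ c b : ZMod p, c ≠ 0 ∧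
      ∀ z : ZMod p, (g : Equiv.Perm (OnePoint (ZMod p))) (OnePoint.some z)
        = OnePoint.some (c * z + b) :=
    fun g => affine_of_fix hp2 hp1 htransl hGfixcard g.2.1 g.2.2
  set F : Gfix G → ZMod p := fun g => (haff g).choose with hF
  have hFspec : ∀ g : Gfix G, ∃ b : ZMod p, F g ≠ 0 ∧
      ∀ z : ZMod p, (g : Equiv.Perm (OnePoint (ZMod p))) (OnePoint.some z)
        = OnePoint.some (F g * z + b) := by
    intro g
    obtain ⟨b, hb1, hb2⟩ := (haff g).choose_spec
    exact ⟨b, hb1, hb2⟩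
  have hFne : ∀ g : Gfix G, F g ≠ 0 := fun g => (hFspec g).choose_spec.1
  have hmul : ∀ g h : Gfix G, F (g * h) = F g * F h := by
    intro g h
    obtain ⟨b1, _, hf1⟩ := hFspec g
    obtain ⟨b2, _, hf2⟩ := hFspec h
    obtain ⟨b3, _, hf3⟩ := hFspec (g * h)
    have hcomp : ∀ z : ZMod p, ((g * h : Gfix G) : Equiv.Perm (OnePoint (ZMod p)))
        (OnePoint.some z) = OnePoint.some (F g * F h * z + (F g * b2 + b1)) := by
      intro z
      rw [Subgroup.coe_mul, Equiv.Perm.mul_apply, hf2, hf1]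
      congr 1
      ring
    exact (unique_aff hf3 hcomp).1
  set Fu : Gfix G →* (ZMod p)ˣ :=
    MonoidHom.mk' (fun g => Units.mk0 (F g) (hFne g))
      (fun g h => by ext; simp [hmul g h]) with hFu
  -- kernel of Fu
  have hker : ∀ g : Gfix G, Fu g = 1 ↔ ∃ a : ZMod p, (g : Equiv.Perm (OnePoint (ZMod p))) = ptrans p a := by
    intro g
    constructor
    · intro h1
      have hF1 : F g = 1 := congrArg Units.val h1
      obtain ⟨b, _, hf⟩ := hFspec g
      refine ⟨b, ?_⟩
      ext x
      cases x with
      | infty => rw [g.2.2]; rfl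
      | coe z => rw [hf z, hF1, ptrans_some, one_mul, add_comm]
    · rintro ⟨a, ha⟩
      obtain ⟨b, _, hf⟩ := hFspec g
      have hfa : ∀ z : ZMod p, (g : Equiv.Perm (OnePoint (ZMod p))) (OnePoint.some z)
          = OnePoint.some (1 * z + a) := by
        intro z; rw [ha, ptrans_some, one_mul, add_comm]
      exact Units.ext (unique_aff hf hfa).1
  -- card of kernel is p
  have hcker : Nat.card Fu.ker = p := by
    have hbij : Function.Bijective (fun a : ZMod p =>
        (⟨⟨ptrans p a, htransl a, rfl⟩, (hker _).mpr ⟨a, rfl⟩⟩ : Fu.ker)) := by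
      constructor
      · intro a b hab
        apply ptrans_inj
        have := congrArg (fun x : Fu.ker => (x : Gfix G).val) hab
        simpa using this
      · rintro ⟨g, hg⟩
        obtain ⟨a, ha⟩ := (hker g).mp hg
        refine ⟨a, ?_⟩
        apply Subtype.ext; apply Subtype.ext
        simpa using ha.symm
    have := Nat.card_eq_of_bijective _ hbij
    rw [← this, Nat.card_eq_fintype_card, ZMod.card]
  -- card of range is m
  have hcrange : Nat.card Fu.range = m := by
    have h1 := Subgroup.card_eq_card_quotient_mul_card_subgroup Fu.ker
    have h2 : Nat.card (Gfix G ⧸ Fu.ker) = Nat.card Fu.range :=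
      Nat.card_congr (QuotientGroup.quotientKerEquivRange Fu).toEquiv
    rw [h2, hcker, hGfixcard] at h1
    have hp0 : 0 < p := by omega
    -- p * m = card range * p
    rw [mul_comm (Nat.card Fu.range) p] at h1
    exact (Nat.eq_of_mul_eq_mul_left hp0 h1).symm
  -- range elements are squares
  have hsq : ∀ x : (ZMod p)ˣ, x ∈ Fu.range → IsSquare (x : ZMod p) := by
    intro x hx
    have hpow : (⟨x, hx⟩ : Fu.range) ^ (Nat.card Fu.range) = 1 := pow_card_eq_one'
    have hpow2 : x ^ m = 1 := by
      rw [hcrange] at hpow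
      have := congrArg (fun y : Fu.range => (y : (ZMod p)ˣ)) hpow
      simpa using this
    have hx0 : (x : ZMod p) ≠ 0 := x.ne_zero
    rw [ZMod.euler_criterion p hx0]
    have hm2 : p / 2 = m := by omega
    rw [hm2]
    have := congrArg (fun y : (ZMod p)ˣ => (y : ZMod p)) hpow2
    simpa using this
  -- the squares subgroup
  set Qs : Subgroup (ZMod p)ˣ := (powMonoidHom 2 : (ZMod p)ˣ →* (ZMod p)ˣ).range with hQs
  have hone_ne : (-1 : (ZMod p)ˣ) ≠ 1 := by
    intro h
    have := congrArg (fun y : (ZMod p)ˣ => (y : ZMod p)) h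
    simp only [Units.val_neg, Units.val_one] at this
    have h2 : (2 : ZMod p) = 0 := by linear_combination -this
    have h3 : ((2 : ℕ) : ZMod p) = 0 := by push_cast; exact h2
    rw [ZMod.natCast_eq_zero_iff] at h3
    have := Nat.le_of_dvd (by norm_num) h3
    omega
  have hckerQ : Nat.card (powMonoidHom 2 : (ZMod p)ˣ →* (ZMod p)ˣ).ker = 2 := by
    have hkereq : (powMonoidHom 2 : (ZMod p)ˣ →* (ZMod p)ˣ).ker
        = Subgroup.zpowers (-1 : (ZMod p)ˣ) := by
      apply le_antisymm
      · intro x hx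
        rw [MonoidHom.mem_ker, powMonoidHom_apply] at hx
        have hval : ((x : ZMod p) - 1) * ((x : ZMod p) + 1) = 0 := by
          have := congrArg (fun y : (ZMod p)ˣ => (y : ZMod p)) hx
          simp only [Units.val_pow_eq_pow_val, Units.val_one] at this
          linear_combination this
        rcases mul_eq_zero.mp hval with h | h
        · have : x = 1 := Units.ext (by simpa [sub_eq_zero] using h)
          rw [this]
          exact Subgroup.one_mem _
        · have : x = -1 := Units.ext (by
            have h2 : (x : ZMod p) = -1 := by linear_combination h
            simpa using h2)
          rw [this]
          exact Subgroup.mem_zpowers _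
      · rw [Subgroup.zpowers_le]
        rw [MonoidHom.mem_ker, powMonoidHom_apply]
        exact neg_one_sq
    rw [hkereq, Nat.card_zpowers]
    exact orderOf_eq_prime (neg_one_sq) hone_ne
  have hcQs : Nat.card Qs = m := by
    have h1 := Subgroup.card_eq_card_quotient_mul_card_subgroup
      (powMonoidHom 2 : (ZMod p)ˣ →* (ZMod p)ˣ).ker
    have h2 : Nat.card ((ZMod p)ˣ ⧸ (powMonoidHom 2 : (ZMod p)ˣ →* (ZMod p)ˣ).ker) = Nat.card Qs :=
      Nat.card_congr (QuotientGroup.quotientKerEquivRange _).toEquiv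
    have h3 : Nat.card (ZMod p)ˣ = p - 1 := by
      rw [Nat.card_eq_fintype_card, ZMod.card_units_eq_totient, Nat.totient_prime (Fact.out : p.Prime)]
    rw [h2, hckerQ, h3] at h1
    omega
  -- Fu.range = Qs
  have hle : Fu.range ≤ Qs := by
    rintro x hx
    obtain ⟨r, hr⟩ := hsq x hx
    have hr0 : r ≠ 0 := by
      intro h; rw [h, mul_zero] at hr; exact x.ne_zero hr
    exact ⟨Units.mk0 r hr0, by ext; simpa [powMonoidHom_apply, sq] using hr.symm⟩
  have hrangeQ : Fu.range = Qs := by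
    apply Subgroup.eq_of_le_of_card_ge hle
    rw [hcrange, hcQs]
  -- now the three conclusions
  refine ⟨?_, ?_, ?_⟩
  · intro g hg hfix c b hform
    have hmem : (⟨g, hg, hfix⟩ : Gfix G) ∈ (⊤ : Subgroup (Gfix G)) := trivial
    obtain ⟨b', _, hf⟩ := hFspec ⟨g, hg, hfix⟩
    have hc : c = F ⟨g, hg, hfix⟩ := (unique_aff hform hf).1
    have : IsSquare ((Fu ⟨g, hg, hfix⟩ : (ZMod p)ˣ) : ZMod p) :=
      hsq _ ⟨⟨g, hg, hfix⟩, rfl⟩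
    rw [hc]
    exact this
  · intro c b hc hcsq
    have hmemQ : Units.mk0 c hc ∈ Qs := by
      obtain ⟨r, hr⟩ := hcsq
      have hr0 : r ≠ 0 := by intro h; rw [h, mul_zero] at hr; exact hc hr
      exact ⟨Units.mk0 r hr0, by ext; simpa [powMonoidHom_apply, sq] using hr.symm⟩
    rw [← hrangeQ] at hmemQ
    obtain ⟨ghat, hghat⟩ := hmemQ
    obtain ⟨b0, _, hf⟩ := hFspec ghat
    have hFg : F ghat = c := by
      have := congrArg (fun y : (ZMod p)ˣ => (y : ZMod p)) hghat
      exact this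
    have heq : ptrans p b * pmul p c hc = ptrans p (b - b0) * (ghat : Equiv.Perm (OnePoint (ZMod p))) := by
      ext x
      cases x with
      | infty =>
        rw [Equiv.Perm.mul_apply, Equiv.Perm.mul_apply, ghat.2.2]
        rfl
      | coe z =>
        rw [Equiv.Perm.mul_apply, Equiv.Perm.mul_apply, hf z, hFg, ptrans_some]
        show OnePoint.some (c * z + b) = OnePoint.some (c * z + b0 + (b - b0))
        congr 1
        ring
    rw [heq]
    exact G.mul_mem (htransl _) ghat.2.1
  · -- card Rset = m
    have hbij : Function.Bijective (fun x : Qs => (⟨(x : (ZMod p)ˣ), (x : (ZMod p)ˣ).ne_zero, by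
        obtain ⟨y, hy⟩ := x.2
        refine ⟨(y : ZMod p), ?_⟩
        have := congrArg (fun u : (ZMod p)ˣ => (u : ZMod p)) hy
        simp only [powMonoidHom_apply] at this
        rw [← this]
        push_cast
        ring⟩ : Rset p)) := by
      constructor
      · intro a b hab
        apply Subtype.ext; apply Units.ext
        simpa using congrArg Subtype.val hab
      · rintro ⟨a, ha0, hasq⟩
        obtain ⟨r, hr⟩ := hasq
        have hr0 : r ≠ 0 := by intro h; rw [h, mul_zero] at hr; exact ha0 hr
        refine ⟨⟨Units.mk0 a ha0, Units.mk0 r hr0, ?_⟩, ?_⟩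
        · ext; simpa [powMonoidHom_apply, sq] using hr.symm
        · apply Subtype.ext; simp
    have := Nat.card_eq_of_bijective _ hbij
    rw [← this, hcQs]

lemma pmul_some (c : ZMod p) (hc : c ≠ 0) (z : ZMod p) :
    pmul p c hc (OnePoint.some z) = OnePoint.some (c * z) := rfl

lemma pmul_infty (c : ZMod p) (hc : c ≠ 0) :
    pmul p c hc OnePoint.infty = OnePoint.infty := rfl

lemma affP_some (c b : ZMod p) (hc : c ≠ 0) (z : ZMod p) :
    (ptrans p b * pmul p c hc) (OnePoint.some z) = OnePoint.some (c * z + b) := rfl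

lemma affP_infty (c b : ZMod p) (hc : c ≠ 0) :
    (ptrans p b * pmul p c hc) OnePoint.infty = OnePoint.infty := rfl

lemma neg_one_sq_zmod (hp2 : p ≠ 2) (hp1 : p % 4 = 1) : IsSquare (-1 : ZMod p) := by
  rw [ZMod.exists_sq_eq_neg_one_iff]
  omega

lemma neg_one_ne_zero_zmod (hp2 : p ≠ 2) : (-1 : ZMod p) ≠ 0 := by
  intro h
  have : (1 : ZMod p) = 0 := by linear_combination -h
  exact one_ne_zero this

lemma two_ne_zero_zmod (hp2 : p ≠ 2) : (2 : ZMod p) ≠ 0 := by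
  intro h
  have h3 : ((2 : ℕ) : ZMod p) = 0 := by push_cast; exact h
  rw [ZMod.natCast_eq_zero_iff] at h3
  have h4 := Nat.le_of_dvd (by norm_num) h3
  have h5 := (Fact.out : p.Prime).two_le
  interval_cases p
  · exact hp2 rfl

lemma exists_tau (htrans : ∀ x y : OnePoint (ZMod p), ∃ g ∈ G, g x = y)
    (htransl : ∀ a : ZMod p, ptrans p a ∈ G) :
    ∃ τ : Equiv.Perm (OnePoint (ZMod p)), τ ∈ G ∧
      τ (OnePoint.some 0) = OnePoint.infty ∧ τ OnePoint.infty = OnePoint.some 0 := by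
  obtain ⟨g, hg, hg0⟩ := htrans (OnePoint.some 0) OnePoint.infty
  obtain ⟨w, hw⟩ : ∃ w : ZMod p, g OnePoint.infty = OnePoint.some w := by
    cases h : g OnePoint.infty with
    | infty =>
      exfalso
      have : g OnePoint.infty = g (OnePoint.some 0) := by rw [h, hg0]
      exact Option.some_ne_none _ ((g.injective this).symm)
    | coe w => exact ⟨w, rfl⟩
  refine ⟨ptrans p (-w) * g, G.mul_mem (htransl (-w)) hg, ?_, ?_⟩
  · rw [Equiv.Perm.mul_apply, hg0, ptrans_infty]
  · rw [Equiv.Perm.mul_apply, hw, ptrans_some]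
    simp

lemma two_trans (htrans : ∀ x y : OnePoint (ZMod p), ∃ g ∈ G, g x = y)
    (htransl : ∀ a : ZMod p, ptrans p a ∈ G)
    {x y : OnePoint (ZMod p)} (hxy : x ≠ y) :
    ∃ σ ∈ G, σ (OnePoint.some 0) = x ∧ σ OnePoint.infty = y := by
  obtain ⟨g, hg, hgy⟩ := htrans OnePoint.infty y
  obtain ⟨v, hv⟩ : ∃ v : ZMod p, g⁻¹ x = OnePoint.some v := by
    cases h : g⁻¹ x with
    | infty =>
      exfalso
      apply hxy
      have : x = g OnePoint.infty := by rw [← h]; simp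
      rw [this, hgy]
    | coe v => exact ⟨v, rfl⟩
  refine ⟨g * ptrans p v, G.mul_mem hg (htransl v), ?_, ?_⟩
  · rw [Equiv.Perm.mul_apply, ptrans_some, zero_add, ← hv]
    simp
  · rw [Equiv.Perm.mul_apply, ptrans_infty, hgy]

lemma invol_fix_infty_form (hp2 : p ≠ 2) (hp1 : p % 4 = 1)
    (htransl : ∀ a : ZMod p, ptrans p a ∈ G)
    (hGfixcard : Nat.card (Gfix G) = p * ((p - 1) / 2))
    {g : Equiv.Perm (OnePoint (ZMod p))} (hg : g ∈ G)
    (hfix : g OnePoint.infty = OnePoint.infty) (hinv : g * g = 1) (hne : g ≠ 1) :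
    ∃ b : ZMod p, ∀ z : ZMod p, g (OnePoint.some z) = OnePoint.some (-z + b) := by
  obtain ⟨c, b, hc, hform⟩ := affine_of_fix hp2 hp1 htransl hGfixcard hg hfix
  have hgg : ∀ z : ZMod p, g (g (OnePoint.some z)) = OnePoint.some z := by
    intro z
    have := congrArg (fun σ : Equiv.Perm (OnePoint (ZMod p)) => σ (OnePoint.some z)) hinv
    simpa [Equiv.Perm.mul_apply] using this
  have h0 := hgg 0
  rw [hform 0, hform, OnePoint.some_eq_iff] at h0
  have h1 := hgg 1
  rw [hform 1, hform, OnePoint.some_eq_iff] at h1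
  -- h0 : c * (c*0+b) + b = 0, h1 : c * (c*1+b) + b = 1
  have hc2 : c * c = 1 := by linear_combination h1 - h0
  have hcpm : c = 1 ∨ c = -1 := by
    have : (c - 1) * (c + 1) = 0 := by linear_combination hc2
    rcases mul_eq_zero.mp this with h | h
    · left; linear_combination h
    · right; linear_combination h
  rcases hcpm with h | h
  · exfalso
    rw [h] at h0
    have hb : b = 0 := by
      have h2 := two_ne_zero_zmod (p := p) hp2
      have h3 : 2 * b = 0 := by linear_combination h0
      have h4 := mul_eq_zero.mp h3
      tauto
    apply hne
    ext x
    cases x with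
    | infty => rw [hfix]; rfl
    | coe z => rw [hform z, h, hb]; simp
  · refine ⟨b, fun z => ?_⟩
    rw [hform z, h]
    congr 1
    ring

lemma fix_card_le_two (hp2 : p ≠ 2) (hp1 : p % 4 = 1)
    (htrans : ∀ x y : OnePoint (ZMod p), ∃ g ∈ G, g x = y)
    (htransl : ∀ a : ZMod p, ptrans p a ∈ G)
    (hGfixcard : Nat.card (Gfix G) = p * ((p - 1) / 2))
    {g : Equiv.Perm (OnePoint (ZMod p))} (hg : g ∈ G)
    (hinv : g * g = 1) (hne : g ≠ 1) :
    Nat.card {x : OnePoint (ZMod p) // g x = x} ≤ 2 := by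
  classical
  by_cases hex : ∃ x, g x = x
  · obtain ⟨x, hx⟩ := hex
    obtain ⟨σ, hσ, hσx⟩ := htrans OnePoint.infty x
    set h : Equiv.Perm (OnePoint (ZMod p)) := σ⁻¹ * g * σ with hh
    have hconj : g = σ * h * σ⁻¹ := by rw [hh]; group
    have hhG : h ∈ G := G.mul_mem (G.mul_mem (G.inv_mem hσ) hg) hσ
    have hhfix : h OnePoint.infty = OnePoint.infty := by
      rw [hh]
      simp only [Equiv.Perm.mul_apply]
      rw [hσx, hx, ← hσx]
      simp
    have hhinv : h * h = 1 := by
      have h2 : h * h = σ⁻¹ * (g * g) * σ := by rw [hh]; group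
      rw [h2, hinv]
      group
    have hhne : h ≠ 1 := by
      intro h1
      apply hne
      rw [hconj, h1]
      group
    obtain ⟨b, hform⟩ := invol_fix_infty_form hp2 hp1 htransl hGfixcard hhG hhfix hhinv hhne
    -- fixed point set of h
    have h2ne : (2 : ZMod p) ≠ 0 := two_ne_zero_zmod hp2
    have hsets : {y : OnePoint (ZMod p) | h y = y}
        = {OnePoint.infty, OnePoint.some (b * 2⁻¹)} := by
      ext y
      cases y with
      | infty => simp [hhfix]
      | coe z =>
        simp only [Set.mem_setOf_eq, Set.mem_insert_iff, Set.mem_singleton_iff]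
        rw [hform z]
        constructor
        · intro hy
          rw [OnePoint.some_eq_iff] at hy
          right
          rw [OnePoint.some_eq_iff]
          field_simp
          linear_combination -hy
        · intro hy
          rcases hy with hy | hy
          · exact absurd hy (by simp [OnePoint.some]; exact Option.some_ne_none z)
          · rw [OnePoint.some_eq_iff] at hy ⊢
            rw [hy]
            field_simp
            ring
    have hcardh : Nat.card {y : OnePoint (ZMod p) // h y = y} = 2 := by
      have e1 : Nat.card {y : OnePoint (ZMod p) // h y = y}
          = Set.ncard {y : OnePoint (ZMod p) | h y = y} := rfl
      rw [e1, hsets]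
      apply Set.ncard_pair
      intro hcon
      exact Option.some_ne_none _ hcon.symm
    -- fix(g) ≃ fix(h)
    have hequiv : {y : OnePoint (ZMod p) // g y = y} ≃ {y : OnePoint (ZMod p) // h y = y} :=
      { toFun := fun y => ⟨σ⁻¹ y.1, by
          rw [hh]
          simp only [Equiv.Perm.mul_apply]
          rw [Equiv.Perm.inv_def, Equiv.apply_symm_apply, y.2]⟩
        invFun := fun y => ⟨σ y.1, by
          rw [hconj]
          simp only [Equiv.Perm.mul_apply]
          rw [Equiv.Perm.inv_def, Equiv.symm_apply_apply, y.2]⟩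
        left_inv := fun y => by apply Subtype.ext; simp
        right_inv := fun y => by apply Subtype.ext; simp }
    rw [Nat.card_congr hequiv, hcardh]
  · have : IsEmpty {x : OnePoint (ZMod p) // g x = x} := ⟨fun x => hex ⟨x.1, x.2⟩⟩
    rw [Nat.card_of_isEmpty]
    omega

lemma invx_count (hp2 : p ≠ 2) (hp1 : p % 4 = 1)
    (htrans : ∀ x y : OnePoint (ZMod p), ∃ g ∈ G, g x = y)
    (htransl : ∀ a : ZMod p, ptrans p a ∈ G)
    (hGfixcard : Nat.card (Gfix G) = p * ((p - 1) / 2))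
    (x : OnePoint (ZMod p)) :
    Nat.card {g : Equiv.Perm (OnePoint (ZMod p)) //
      (g ∈ G ∧ g * g = 1 ∧ g ≠ 1) ∧ g x = x} = p := by
  classical
  have hneg := neg_one_ne_zero_zmod (p := p) hp2
  have hnegsq := neg_one_sq_zmod (p := p) hp2 hp1
  have h2ne : (2 : ZMod p) ≠ 0 := two_ne_zero_zmod hp2
  -- first the case x = ∞
  have hinfty : Nat.card {g : Equiv.Perm (OnePoint (ZMod p)) //
      (g ∈ G ∧ g * g = 1 ∧ g ≠ 1) ∧ g OnePoint.infty = OnePoint.infty} = p := by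
    have hbij : Function.Bijective (fun b : ZMod p =>
        (⟨ptrans p b * pmul p (-1) hneg, ⟨(structure_Gfix hp2 hp1 htransl hGfixcard).2.1 (-1) b hneg hnegsq, by
          ext w
          cases w with
          | infty => rw [Equiv.Perm.mul_apply, affP_infty, affP_infty]; rfl
          | coe z =>
            rw [Equiv.Perm.mul_apply, affP_some, affP_some]
            show OnePoint.some (-1 * (-1 * z + b) + b) = OnePoint.some z
            congr 1
            ring, by
          intro h1
          have e0 := congrArg (fun σ : Equiv.Perm (OnePoint (ZMod p)) => σ (OnePoint.some 0)) h1
          have e1 := congrArg (fun σ : Equiv.Perm (OnePoint (ZMod p)) => σ (OnePoint.some 1)) h1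
          simp only [affP_some, Equiv.Perm.one_apply] at e0 e1
          rw [OnePoint.some_eq_iff] at e0 e1
          exact h2ne (by linear_combination e0 - e1)⟩, affP_infty (-1) b hneg⟩ :
          {g : Equiv.Perm (OnePoint (ZMod p)) //
            (g ∈ G ∧ g * g = 1 ∧ g ≠ 1) ∧ g OnePoint.infty = OnePoint.infty})) := by
      constructor
      · intro a b hab
        have := congrArg (fun y : {g : Equiv.Perm (OnePoint (ZMod p)) //
            (g ∈ G ∧ g * g = 1 ∧ g ≠ 1) ∧ g OnePoint.infty = OnePoint.infty} =>
          y.1 (OnePoint.some 0)) hab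
        simp only [affP_some] at this
        rw [OnePoint.some_eq_iff] at this
        linear_combination this
      · rintro ⟨g, ⟨hg, hinv, hne⟩, hfix⟩
        obtain ⟨b, hform⟩ := invol_fix_infty_form hp2 hp1 htransl hGfixcard hg hfix hinv hne
        refine ⟨b, ?_⟩
        apply Subtype.ext
        ext w
        cases w with
        | infty => rw [affP_infty, hfix]
        | coe z => rw [affP_some, hform z]; congr 1; ring
    have := Nat.card_eq_of_bijective _ hbij
    rw [← this, Nat.card_eq_fintype_card, ZMod.card]
  by_cases hx : x = OnePoint.infty
  · rw [hx]; exact hinfty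
  obtain ⟨σ, hσ, hσx⟩ := htrans OnePoint.infty x
  have hbij2 : Function.Bijective (fun g : {g : Equiv.Perm (OnePoint (ZMod p)) //
      (g ∈ G ∧ g * g = 1 ∧ g ≠ 1) ∧ g OnePoint.infty = OnePoint.infty} =>
      (⟨σ * g.1 * σ⁻¹, ⟨G.mul_mem (G.mul_mem hσ g.2.1.1) (G.inv_mem hσ), by
          have h2 : (σ * g.1 * σ⁻¹) * (σ * g.1 * σ⁻¹) = σ * (g.1 * g.1) * σ⁻¹ := by group
          rw [h2, g.2.1.2.1]; group, by
          intro h1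
          apply g.2.1.2.2
          have h2 : σ⁻¹ * (σ * g.1 * σ⁻¹) * σ = σ⁻¹ * 1 * σ := by rw [h1]
          group at h2
          simpa using h2⟩, by
        simp only [Equiv.Perm.mul_apply]
        rw [← hσx, Equiv.Perm.inv_def, Equiv.symm_apply_apply, g.2.2, hσx]⟩ :
        {g : Equiv.Perm (OnePoint (ZMod p)) // (g ∈ G ∧ g * g = 1 ∧ g ≠ 1) ∧ g x = x})) := by
    constructor
    · intro a b hab
      apply Subtype.ext
      have h1 := congrArg (fun y : {g : Equiv.Perm (OnePoint (ZMod p)) //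
          (g ∈ G ∧ g * g = 1 ∧ g ≠ 1) ∧ g x = x} => σ⁻¹ * y.1 * σ) hab
      simp only at h1
      have e : ∀ c : Equiv.Perm (OnePoint (ZMod p)), σ⁻¹ * (σ * c * σ⁻¹) * σ = c := by
        intro c; group
      rwa [e, e] at h1
    · rintro ⟨g, ⟨hg, hinv, hne⟩, hfix⟩
      refine ⟨⟨σ⁻¹ * g * σ, ⟨G.mul_mem (G.mul_mem (G.inv_mem hσ) hg) hσ, by
        have h2 : (σ⁻¹ * g * σ) * (σ⁻¹ * g * σ) = σ⁻¹ * (g * g) * σ := by group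
        rw [h2, hinv]; group, by
        intro h1
        apply hne
        have h2 : σ * (σ⁻¹ * g * σ) * σ⁻¹ = σ * 1 * σ⁻¹ := by rw [h1]
        group at h2
        simpa using h2⟩, by
        simp only [Equiv.Perm.mul_apply]
        rw [hσx, hfix, ← hσx]
        simp⟩, ?_⟩
      apply Subtype.ext
      show σ * (σ⁻¹ * g * σ) * σ⁻¹ = g
      group
  rw [← Nat.card_eq_of_bijective _ hbij2, hinfty]

lemma card_fiber_all {α β : Type*} [Fintype α] [Fintype β] (Q : α → β → Prop) :
    Nat.card {ab : α × β // Q ab.1 ab.2} = ∑ a : α, Nat.card {b : β // Q a b} := by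
  classical
  rw [Nat.card_eq_fintype_card, Fintype.card_congr (Equiv.subtypeProdEquivSigmaSubtype Q),
    Fintype.card_sigma]
  exact Finset.sum_congr rfl (fun a _ => (Nat.card_eq_fintype_card).symm)

lemma card_fiber_subtype {α β : Type*} [Fintype α] [Fintype β] (P : α → Prop) [DecidablePred P]
    (Q : α → β → Prop) :
    Nat.card {ab : α × β // P ab.1 ∧ Q ab.1 ab.2}
      = ∑ a : {a : α // P a}, Nat.card {b : β // Q a.1 b} := by
  classical
  have e : {ab : α × β // P ab.1 ∧ Q ab.1 ab.2} ≃ Σ a : {a : α // P a}, {b : β // Q a.1 b} :=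
    { toFun := fun x => ⟨⟨x.1.1, x.2.1⟩, ⟨x.1.2, x.2.2⟩⟩
      invFun := fun y => ⟨(y.1.1, y.2.1), y.1.2, y.2.2⟩
      left_inv := fun x => rfl
      right_inv := fun y => rfl }
  rw [Nat.card_eq_fintype_card, Fintype.card_congr e, Fintype.card_sigma]
  exact Finset.sum_congr rfl (fun a _ => (Nat.card_eq_fintype_card).symm)

lemma fintype_cardX : Fintype.card (OnePoint (ZMod p)) = p + 1 := by
  show Fintype.card (Option (ZMod p)) = p + 1
  simp [ZMod.card]

lemma fix_add_mov (g : Equiv.Perm (OnePoint (ZMod p))) :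
    Nat.card {x : OnePoint (ZMod p) // g x = x}
      + Nat.card {x : OnePoint (ZMod p) // ¬ (g x = x)} = p + 1 := by
  classical
  rw [Nat.card_eq_fintype_card, Nat.card_eq_fintype_card, Fintype.card_subtype_compl]
  have h1 : Fintype.card {x : OnePoint (ZMod p) // g x = x} ≤ Fintype.card (OnePoint (ZMod p)) :=
    Fintype.card_subtype_le _
  rw [fintype_cardX] at h1 ⊢
  omega

lemma kbar_invol (hp2 : p ≠ 2) (hp1 : p % 4 = 1)
    (htrans : ∀ x y : OnePoint (ZMod p), ∃ g ∈ G, g x = y)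
    (htransl : ∀ a : ZMod p, ptrans p a ∈ G)
    (hGfixcard : Nat.card (Gfix G) = p * ((p - 1) / 2)) :
    ∀ g : Equiv.Perm (OnePoint (ZMod p)), g ∈ G → g (OnePoint.some 0) = OnePoint.infty →
      g OnePoint.infty = OnePoint.some 0 → g * g = 1 := by
  classical
  have hp5 : 5 ≤ p := by have := (Fact.out : p.Prime).two_le; omega
  set m := (p - 1) / 2 with hm
  have hpm : p = 2 * m + 1 := by omega
  obtain ⟨τ, hτG, hτ0, hτi⟩ := exists_tau htrans htransl
  set P : Equiv.Perm (OnePoint (ZMod p)) → Prop :=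
    fun g => g ∈ G ∧ g * g = 1 ∧ g ≠ 1 with hP
  set jn := Nat.card {g : Equiv.Perm (OnePoint (ZMod p)) //
    P g ∧ g (OnePoint.some 0) = OnePoint.infty} with hjn
  -- `G0`: fixing both 0 and ∞; its card is m
  have hG0 : Nat.card {g : Equiv.Perm (OnePoint (ZMod p)) //
      g ∈ G ∧ g OnePoint.infty = OnePoint.infty ∧ g (OnePoint.some 0) = OnePoint.some 0} = m := by
    have hbij : Function.Bijective (fun c : (Rset p) =>
        (⟨pmul p c.1 c.2.1, by
            have h1 := (structure_Gfix hp2 hp1 htransl hGfixcard).2.1 c.1 0 c.2.1 c.2.2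
            rw [ptrans_zero, one_mul] at h1
            exact h1, pmul_infty c.1 c.2.1, by rw [pmul_some]; simp⟩ :
          {g : Equiv.Perm (OnePoint (ZMod p)) //
            g ∈ G ∧ g OnePoint.infty = OnePoint.infty ∧ g (OnePoint.some 0) = OnePoint.some 0})) := by
      constructor
      · intro a b hab
        apply Subtype.ext
        have := congrArg (fun y : {g : Equiv.Perm (OnePoint (ZMod p)) //
            g ∈ G ∧ g OnePoint.infty = OnePoint.infty ∧ g (OnePoint.some 0) = OnePoint.some 0} =>
          y.1 (OnePoint.some 1)) hab
        simp only [pmul_some, mul_one] at this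
        rwa [OnePoint.some_eq_iff] at this
      · rintro ⟨g, hg, hfix, h0⟩
        obtain ⟨c, b, hc, hform⟩ := affine_of_fix hp2 hp1 htransl hGfixcard hg hfix
        have hb : b = 0 := by
          have := h0
          rw [hform 0, OnePoint.some_eq_iff] at this
          linear_combination this
        have hcsq : IsSquare c :=
          (structure_Gfix hp2 hp1 htransl hGfixcard).1 g hg hfix c b hform
        refine ⟨⟨c, hc, hcsq⟩, ?_⟩
        apply Subtype.ext
        ext w
        cases w with
        | infty => rw [pmul_infty, hfix]
        | coe z => rw [pmul_some, hform z, hb, add_zero]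
    rw [← Nat.card_eq_of_bijective _ hbij]
    exact (structure_Gfix hp2 hp1 htransl hGfixcard).2.2
  -- `KB`: swapping 0 and ∞; its card is m
  have hKB : Nat.card {g : Equiv.Perm (OnePoint (ZMod p)) //
      g ∈ G ∧ g (OnePoint.some 0) = OnePoint.infty ∧ g OnePoint.infty = OnePoint.some 0} = m := by
    rw [← hG0]
    apply Nat.card_eq_of_bijective (fun g => ⟨g.1 * τ, G.mul_mem g.2.1 hτG, by
      rw [Equiv.Perm.mul_apply, hτi, g.2.2.1], by
      rw [Equiv.Perm.mul_apply, hτ0, g.2.2.2]⟩)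
    constructor
    · intro a b hab
      apply Subtype.ext
      have := congrArg Subtype.val hab
      simpa using mul_right_cancel this
    · rintro ⟨g, hg, hfix, h0⟩
      refine ⟨⟨g * τ⁻¹, G.mul_mem hg (G.inv_mem hτG), ?_, ?_⟩, ?_⟩
      · rw [Equiv.Perm.mul_apply]
        have : τ⁻¹ (OnePoint.some 0) = OnePoint.infty := by rw [← hτi]; simp
        rw [this, hfix]
      · rw [Equiv.Perm.mul_apply]
        have : τ⁻¹ OnePoint.infty = OnePoint.some 0 := by rw [← hτ0]; simp
        rw [this, h0]
      · apply Subtype.ext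
        show g * τ⁻¹ * τ = g
        group
  -- jn ≤ m
  have hjle : jn ≤ m := by
    rw [hjn, ← hKB]
    apply Nat.card_le_card_of_injective (fun g => ⟨g.1, g.2.1.1, g.2.2, by
      have h2 := congrArg (fun σ : Equiv.Perm (OnePoint (ZMod p)) => σ (OnePoint.some 0))
        g.2.1.2.1
      simp only [Equiv.Perm.mul_apply, Equiv.Perm.one_apply] at h2
      rw [g.2.2] at h2
      exact h2⟩)
    intro a b hab
    apply Subtype.ext
    have := congrArg Subtype.val hab
    simpa using this
  -- fibers over pairs
  have hfibers : ∀ x y : OnePoint (ZMod p), x ≠ y →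
      Nat.card {g : Equiv.Perm (OnePoint (ZMod p)) // P g ∧ g x = y} = jn := by
    intro x y hxy
    obtain ⟨σ, hσ, hσ0, hσi⟩ := two_trans htrans htransl hxy
    rw [hjn]
    symm
    apply Nat.card_eq_of_bijective (fun g => (⟨σ * g.1 * σ⁻¹, ⟨G.mul_mem (G.mul_mem hσ g.2.1.1) (G.inv_mem hσ), by
        have h2 : (σ * g.1 * σ⁻¹) * (σ * g.1 * σ⁻¹) = σ * (g.1 * g.1) * σ⁻¹ := by group
        rw [h2, g.2.1.2.1]; group, by
        intro h1
        apply g.2.1.2.2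
        have h2 : σ⁻¹ * (σ * g.1 * σ⁻¹) * σ = σ⁻¹ * 1 * σ := by rw [h1]
        group at h2
        simpa using h2⟩, by
        simp only [Equiv.Perm.mul_apply]
        have h3 : σ⁻¹ x = OnePoint.some 0 := by rw [← hσ0]; simp
        rw [h3, g.2.2, hσi]⟩ :
      {g : Equiv.Perm (OnePoint (ZMod p)) // P g ∧ g x = y}))
    constructor
    · intro a b hab
      apply Subtype.ext
      have h1 := congrArg Subtype.val hab
      simp only at h1
      have e : ∀ c : Equiv.Perm (OnePoint (ZMod p)), σ⁻¹ * (σ * c * σ⁻¹) * σ = c := by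
        intro c; group
      have h2 := congrArg (fun k => σ⁻¹ * k * σ) h1
      rwa [e, e] at h2
    · rintro ⟨g, ⟨hg, hinv, hne⟩, hgx⟩
      refine ⟨⟨σ⁻¹ * g * σ, ⟨G.mul_mem (G.mul_mem (G.inv_mem hσ) hg) hσ, by
        have h2 : (σ⁻¹ * g * σ) * (σ⁻¹ * g * σ) = σ⁻¹ * (g * g) * σ := by group
        rw [h2, hinv]; group, by
        intro h1
        apply hne
        have h2 : σ * (σ⁻¹ * g * σ) * σ⁻¹ = σ * 1 * σ⁻¹ := by rw [h1]
        group at h2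
        simpa using h2⟩, by
        simp only [Equiv.Perm.mul_apply]
        rw [hσ0, hgx, ← hσi]
        simp⟩, ?_⟩
      apply Subtype.ext
      show σ * (σ⁻¹ * g * σ) * σ⁻¹ = g
      group
  -- total count I
  set I := Nat.card {g : Equiv.Perm (OnePoint (ZMod p)) // P g} with hI
  -- C1 : count of (involution, fixed point) pairs
  have hC1 : Nat.card {gx : Equiv.Perm (OnePoint (ZMod p)) × OnePoint (ZMod p) //
      P gx.1 ∧ gx.1 gx.2 = gx.2} = (p + 1) * p := by
    have e : {gx : Equiv.Perm (OnePoint (ZMod p)) × OnePoint (ZMod p) //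
        P gx.1 ∧ gx.1 gx.2 = gx.2}
        ≃ {xg : OnePoint (ZMod p) × Equiv.Perm (OnePoint (ZMod p)) //
          P xg.2 ∧ xg.2 xg.1 = xg.1} :=
      { toFun := fun x => ⟨(x.1.2, x.1.1), x.2⟩
        invFun := fun x => ⟨(x.1.2, x.1.1), x.2⟩
        left_inv := fun x => rfl
        right_inv := fun x => rfl }
    rw [Nat.card_congr e]
    have h1 := card_fiber_all (α := OnePoint (ZMod p)) (β := Equiv.Perm (OnePoint (ZMod p)))
      (fun x g => P g ∧ g x = x)
    rw [h1]
    have h2 : ∀ x : OnePoint (ZMod p),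
        Nat.card {g : Equiv.Perm (OnePoint (ZMod p)) // P g ∧ g x = x} = p := fun x =>
      invx_count hp2 hp1 htrans htransl hGfixcard x
    rw [Finset.sum_congr rfl (fun x _ => h2 x), Finset.sum_const, Finset.card_univ, fintype_cardX,
      smul_eq_mul]
  -- C1 as a sum over involutions, and the bound
  have hC1' : Nat.card {gx : Equiv.Perm (OnePoint (ZMod p)) × OnePoint (ZMod p) //
      P gx.1 ∧ gx.1 gx.2 = gx.2}
      = ∑ g : {g : Equiv.Perm (OnePoint (ZMod p)) // P g},
        Nat.card {x : OnePoint (ZMod p) // g.1 x = x} :=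
    card_fiber_subtype P (fun g x => g x = x)
  have hbound : (p + 1) * p ≤ 2 * I := by
    rw [← hC1, hC1']
    have h1 : ∀ g : {g : Equiv.Perm (OnePoint (ZMod p)) // P g},
        Nat.card {x : OnePoint (ZMod p) // g.1 x = x} ≤ 2 := fun g =>
      fix_card_le_two hp2 hp1 htrans htransl hGfixcard g.2.1 g.2.2.1 g.2.2.2
    calc ∑ g : {g : Equiv.Perm (OnePoint (ZMod p)) // P g},
        Nat.card {x : OnePoint (ZMod p) // g.1 x = x}
        ≤ ∑ _g : {g : Equiv.Perm (OnePoint (ZMod p)) // P g}, 2 :=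
          Finset.sum_le_sum (fun g _ => h1 g)
      _ = I * 2 := by rw [Finset.sum_const, Finset.card_univ, smul_eq_mul, hI, Nat.card_eq_fintype_card]
      _ = 2 * I := by ring
  -- C2 : moved points
  have hC2' : Nat.card {gx : Equiv.Perm (OnePoint (ZMod p)) × OnePoint (ZMod p) //
      P gx.1 ∧ ¬ (gx.1 gx.2 = gx.2)}
      = ∑ g : {g : Equiv.Perm (OnePoint (ZMod p)) // P g},
        Nat.card {x : OnePoint (ZMod p) // ¬ (g.1 x = x)} :=
    card_fiber_subtype P (fun g x => ¬ (g x = x))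
  -- triples count
  have hC2 : Nat.card {gx : Equiv.Perm (OnePoint (ZMod p)) × OnePoint (ZMod p) //
      P gx.1 ∧ ¬ (gx.1 gx.2 = gx.2)} = (p + 1) * (p * jn) := by
    have e : {gx : Equiv.Perm (OnePoint (ZMod p)) × OnePoint (ZMod p) //
        P gx.1 ∧ ¬ (gx.1 gx.2 = gx.2)}
        ≃ {xyg : (OnePoint (ZMod p) × OnePoint (ZMod p)) × Equiv.Perm (OnePoint (ZMod p)) //
            (P xyg.2 ∧ xyg.2 xyg.1.1 = xyg.1.2) ∧ xyg.1.1 ≠ xyg.1.2} :=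
      { toFun := fun x => ⟨((x.1.2, x.1.1 x.1.2), x.1.1), ⟨x.2.1, rfl⟩, fun h => x.2.2 h.symm⟩
        invFun := fun y => ⟨(y.1.2, y.1.1.1), y.2.1.1, by
          intro h
          apply y.2.2
          rw [← y.2.1.2, h]⟩
        left_inv := fun x => rfl
        right_inv := fun y => by
          apply Subtype.ext
          show ((y.1.1.1, y.1.2 y.1.1.1), y.1.2) = y.1
          rw [y.2.1.2]
        }
    rw [Nat.card_congr e]
    have h1 := card_fiber_all (α := OnePoint (ZMod p) × OnePoint (ZMod p))
      (β := Equiv.Perm (OnePoint (ZMod p)))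
      (fun xy g => (P g ∧ g xy.1 = xy.2) ∧ xy.1 ≠ xy.2)
    rw [h1]
    have h2 : ∀ xy : OnePoint (ZMod p) × OnePoint (ZMod p),
        Nat.card {g : Equiv.Perm (OnePoint (ZMod p)) // (P g ∧ g xy.1 = xy.2) ∧ xy.1 ≠ xy.2}
          = if xy.1 = xy.2 then 0 else jn := by
      rintro ⟨x, y⟩
      by_cases hxy : x = y
      · rw [if_pos hxy]
        have : IsEmpty {g : Equiv.Perm (OnePoint (ZMod p)) // (P g ∧ g x = y) ∧ x ≠ y} :=
          ⟨fun g => g.2.2 hxy⟩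
        exact Nat.card_of_isEmpty
      · rw [if_neg hxy]
        rw [← hfibers x y hxy]
        apply Nat.card_congr
        exact
          { toFun := fun g => ⟨g.1, g.2.1⟩
            invFun := fun g => ⟨g.1, g.2, hxy⟩
            left_inv := fun g => rfl
            right_inv := fun g => rfl }
    rw [Finset.sum_congr rfl (fun xy _ => h2 xy)]
    rw [Fintype.sum_prod_type]
    have h3 : ∀ x : OnePoint (ZMod p),
        (∑ y : OnePoint (ZMod p), if x = y then 0 else jn) = p * jn := by
      intro x
      rw [Finset.sum_ite, Finset.sum_const, Finset.sum_const]
      have h4 : (Finset.univ.filter (fun y : OnePoint (ZMod p) => ¬ (x = y))).card = p := by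
        have h5 : Finset.univ.filter (fun y : OnePoint (ZMod p) => ¬ (x = y))
            = Finset.univ.erase x := by
          ext y
          simp [Finset.mem_erase, eq_comm]
        rw [h5, Finset.card_erase_of_mem (Finset.mem_univ x), Finset.card_univ, fintype_cardX]
        omega
      rw [h4]
      simp [mul_comm]
    rw [Finset.sum_congr rfl (fun x _ => h3 x), Finset.sum_const, Finset.card_univ, fintype_cardX,
      smul_eq_mul]
  -- combine : I * (p+1) = C1 + C2
  have hsplit : I * (p + 1) = (p + 1) * p + (p + 1) * (p * jn) := by
    rw [← hC1, ← hC2, hC1', hC2']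
    rw [← Finset.sum_add_distrib]
    have h1 : ∀ g : {g : Equiv.Perm (OnePoint (ZMod p)) // P g},
        Nat.card {x : OnePoint (ZMod p) // g.1 x = x}
          + Nat.card {x : OnePoint (ZMod p) // ¬ (g.1 x = x)} = p + 1 :=
      fun g => fix_add_mov g.1
    rw [Finset.sum_congr rfl (fun g _ => h1 g), Finset.sum_const, Finset.card_univ, smul_eq_mul,
      hI, Nat.card_eq_fintype_card]
  -- conclude jn = m
  have hIval : I = p + p * jn := by
    have h1 : I * (p + 1) = (p + p * jn) * (p + 1) := by rw [hsplit]; ring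
    have h2 := Nat.eq_of_mul_eq_mul_right (show 0 < p + 1 by omega) h1
    exact h2
  have hjge : m ≤ jn := by
    rw [hIval] at hbound
    -- (p+1)*p ≤ 2*(p + p*jn)
    have h6 : (p + 1) * p = 2 * (p * m) + 2 * p := by
      have h7 : p + 1 = 2 * m + 2 := by omega
      calc (p + 1) * p = p * (p + 1) := by ring
        _ = p * (2 * m + 2) := by rw [h7]
        _ = 2 * (p * m) + 2 * p := by ring
    have h8 : 2 * (p + p * jn) = 2 * (p * jn) + 2 * p := by ring
    have h9 : p * m ≤ p * jn := by omega
    exact Nat.le_of_mul_le_mul_left h9 (by omega)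
  have hjm : jn = m := le_antisymm hjle hjge
  -- final set equality
  intro g hg h0 hgi
  have hsub : {g : Equiv.Perm (OnePoint (ZMod p)) | P g ∧ g (OnePoint.some 0) = OnePoint.infty}
      ⊆ {g : Equiv.Perm (OnePoint (ZMod p)) |
          g ∈ G ∧ g (OnePoint.some 0) = OnePoint.infty ∧ g OnePoint.infty = OnePoint.some 0} := by
    rintro k ⟨⟨hk, hkinv, hkne⟩, hk0⟩
    refine ⟨hk, hk0, ?_⟩
    have h2 := congrArg (fun σ : Equiv.Perm (OnePoint (ZMod p)) => σ (OnePoint.some 0)) hkinv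
    simp only [Equiv.Perm.mul_apply, Equiv.Perm.one_apply] at h2
    rw [hk0] at h2
    exact h2
  have e1 : Set.ncard {g : Equiv.Perm (OnePoint (ZMod p)) |
      P g ∧ g (OnePoint.some 0) = OnePoint.infty} = jn := by
    rw [← Nat.card_coe_set_eq]; rfl
  have e2 : Set.ncard {g : Equiv.Perm (OnePoint (ZMod p)) |
      g ∈ G ∧ g (OnePoint.some 0) = OnePoint.infty ∧ g OnePoint.infty = OnePoint.some 0} = m := by
    rw [← Nat.card_coe_set_eq]; exact hKB
  have heq := Set.eq_of_subset_of_ncard_le hsub (by rw [e1, e2, hjm]) (Set.toFinite _)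
  have hgmem : g ∈ {g : Equiv.Perm (OnePoint (ZMod p)) |
      g ∈ G ∧ g (OnePoint.some 0) = OnePoint.infty ∧ g OnePoint.infty = OnePoint.some 0} :=
    ⟨hg, h0, hgi⟩
  rw [← heq] at hgmem
  exact hgmem.1.2.1

lemma pmul_mul (a b : ZMod p) (ha : a ≠ 0) (hb : b ≠ 0) :
    pmul p a ha * pmul p b hb = pmul p (a * b) (mul_ne_zero ha hb) := by
  ext x
  cases x with
  | infty => rfl
  | coe z =>
    rw [Equiv.Perm.mul_apply, pmul_some, pmul_some, pmul_some]
    rw [OnePoint.some_eq_iff]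
    ring

lemma pmul_one' : pmul p (1 : ZMod p) one_ne_zero = 1 := by
  ext x
  cases x with
  | infty => rfl
  | coe z => rw [pmul_some, one_mul]; rfl

lemma pmul_inv (a : ZMod p) (ha : a ≠ 0) :
    (pmul p a ha)⁻¹ = pmul p a⁻¹ (inv_ne_zero ha) := by
  apply inv_eq_of_mul_eq_one_right
  rw [pmul_mul]
  have h1 : a * a⁻¹ = 1 := mul_inv_cancel₀ ha
  have : pmul p (a * a⁻¹) (mul_ne_zero ha (inv_ne_zero ha)) = pmul p 1 one_ne_zero := by
    congr 1
  rw [this, pmul_one']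

lemma nonsq_pow (hp2 : p ≠ 2) {a : ZMod p} (ha : a ≠ 0) (hns : ¬ IsSquare a) :
    a ^ ((p - 1) / 2) = -1 := by
  have hp5 := (Fact.out : p.Prime).two_le
  have hm2 : p / 2 = (p - 1) / 2 := by
    have : p % 2 = 1 := Nat.odd_iff.mp ((Fact.out : p.Prime).odd_of_ne_two hp2)
    omega
  have h1 : (a ^ ((p - 1) / 2)) ^ 2 = 1 := by
    rw [← pow_mul]
    have h2 : (p - 1) / 2 * 2 = p - 1 := by
      have : p % 2 = 1 := Nat.odd_iff.mp ((Fact.out : p.Prime).odd_of_ne_two hp2)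
      omega
    rw [h2]
    exact ZMod.pow_card_sub_one_eq_one ha
  have h3 : (a ^ ((p - 1) / 2) - 1) * (a ^ ((p - 1) / 2) + 1) = 0 := by linear_combination h1
  rcases mul_eq_zero.mp h3 with h | h
  · exfalso
    apply hns
    rw [ZMod.euler_criterion p ha, hm2]
    linear_combination h
  · linear_combination h

lemma nonsq_div_sq (hp2 : p ≠ 2) {a b : ZMod p} (ha : a ≠ 0) (hans : ¬ IsSquare a)
    (hb : b ≠ 0) (hbns : ¬ IsSquare b) : IsSquare (a * b⁻¹) := by
  have hm2 : p / 2 = (p - 1) / 2 := by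
    have h2 := (Fact.out : p.Prime).two_le
    have : p % 2 = 1 := Nat.odd_iff.mp ((Fact.out : p.Prime).odd_of_ne_two hp2)
    omega
  have hab : a * b⁻¹ ≠ 0 := mul_ne_zero ha (inv_ne_zero hb)
  rw [ZMod.euler_criterion p hab, hm2]
  rw [mul_pow, inv_pow]
  rw [nonsq_pow hp2 ha hans, nonsq_pow hp2 hb hbns]
  simp

theorem main (hp2 : p ≠ 2) (hp1 : p % 4 = 1)
    (htrans : ∀ x y : OnePoint (ZMod p), ∃ g ∈ G, g x = y)
    (hcard : Nat.card G = (p ^ 3 - p) / 2)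
    (htransl : ∀ a : ZMod p, ptrans p a ∈ G) :
    ∃ lam : Equiv.Perm (OnePoint (ZMod p)), ∃ c : ZMod p, c ≠ 0 ∧
      lam ∈ G ∧ lam (OnePoint.some (0 : ZMod p)) = OnePoint.infty ∧
      lam OnePoint.infty = OnePoint.some (0 : ZMod p) ∧
      (∀ z ∈ Rset p, lam (OnePoint.some z) = OnePoint.some z⁻¹) ∧
      (∀ z ∈ Nset p, lam (OnePoint.some z) = OnePoint.some (c * z⁻¹)) := by
  classical
  have hGfixcard : Nat.card (Gfix G) = p * ((p - 1) / 2) :=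
    card_stab_infty htrans hp2 hcard
  obtain ⟨τ, hτG, hτ0, hτi⟩ := exists_tau htrans htransl
  have hKBinv := kbar_invol hp2 hp1 htrans htransl hGfixcard
  have hττ : τ * τ = 1 := hKBinv τ hτG hτ0 hτi
  have hττpt : ∀ x, τ (τ x) = x := by
    intro x
    have := congrArg (fun σ : Equiv.Perm (OnePoint (ZMod p)) => σ x) hττ
    simpa [Equiv.Perm.mul_apply] using this
  have hstruct := structure_Gfix hp2 hp1 htransl hGfixcard
  have hpmulmem : ∀ (s : ZMod p) (hs : s ≠ 0), IsSquare s → pmul p s hs ∈ G := by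
    intro s hs hsq
    have h1 := hstruct.2.1 s 0 hs hsq
    rwa [ptrans_zero, one_mul] at h1
  have hesrel : ∀ (s : ZMod p) (hs : s ≠ 0), IsSquare s →
      ∀ x, τ (pmul p s hs (τ x)) = pmul p s⁻¹ (inv_ne_zero hs) x := by
    intro s hs hsq x
    have hσG : pmul p s hs * τ ∈ G := G.mul_mem (hpmulmem s hs hsq) hτG
    have hσ0 : (pmul p s hs * τ) (OnePoint.some 0) = OnePoint.infty := by
      rw [Equiv.Perm.mul_apply, hτ0, pmul_infty]
    have hσi : (pmul p s hs * τ) OnePoint.infty = OnePoint.some 0 := by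
      rw [Equiv.Perm.mul_apply, hτi, pmul_some, mul_zero]
    have hσσ := hKBinv _ hσG hσ0 hσi
    have h1 := congrArg (fun σ : Equiv.Perm (OnePoint (ZMod p)) => σ x) hσσ
    simp only [Equiv.Perm.mul_apply, Equiv.Perm.one_apply] at h1
    have h2 := congrArg (fun y => (pmul p s hs)⁻¹ y) h1
    rw [Equiv.Perm.inv_def, Equiv.symm_apply_apply, ← Equiv.Perm.inv_def] at h2
    rw [pmul_inv] at h2
    exact h2
  -- u := τ(1)
  obtain ⟨u, hu_eq⟩ : ∃ u : ZMod p, τ (OnePoint.some 1) = OnePoint.some u := by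
    cases h : τ (OnePoint.some 1) with
    | infty =>
      exfalso
      have h2 : τ (OnePoint.some 1) = τ (OnePoint.some 0) := by rw [h, hτ0]
      have h3 := τ.injective h2
      rw [OnePoint.some_eq_iff] at h3
      exact one_ne_zero h3
    | coe w => exact ⟨w, rfl⟩
  have hu0 : u ≠ 0 := by
    intro h
    rw [h] at hu_eq
    have h2 : τ (OnePoint.some 1) = τ OnePoint.infty := by rw [hu_eq, hτi]
    exact Option.some_ne_none _ (τ.injective h2)
  have hτu : τ (OnePoint.some u) = OnePoint.some 1 := by rw [← hu_eq, hττpt]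
  -- value propagation
  have hval : ∀ (s : ZMod p) (hs : s ≠ 0), IsSquare s → ∀ (w x : ZMod p),
      τ (OnePoint.some w) = OnePoint.some x →
      τ (OnePoint.some (s * w)) = OnePoint.some (s⁻¹ * x) := by
    intro s hs hsq w x hwx
    have h1 := hesrel s hs hsq (τ (OnePoint.some w))
    rw [hττpt, pmul_some, hwx, pmul_some] at h1
    exact h1
  have hRval : ∀ z : ZMod p, z ≠ 0 → IsSquare z →
      τ (OnePoint.some z) = OnePoint.some (z⁻¹ * u) := by
    intro z hz hsq
    have h1 := hval z hz hsq 1 u hu_eq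
    rwa [mul_one] at h1
  -- a nonsquare
  obtain ⟨n0, hn0ns⟩ := FiniteField.exists_nonsquare (F := ZMod p)
    (by rw [ZMod.ringChar_zmod_n]; exact hp2)
  have hn00 : n0 ≠ 0 := fun h => hn0ns (by rw [h]; exact ⟨0, by simp⟩)
  obtain ⟨v, hv_eq⟩ : ∃ v : ZMod p, τ (OnePoint.some n0) = OnePoint.some v := by
    cases h : τ (OnePoint.some n0) with
    | infty =>
      exfalso
      have h2 : τ (OnePoint.some n0) = τ (OnePoint.some 0) := by rw [h, hτ0]
      have h3 := τ.injective h2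
      rw [OnePoint.some_eq_iff] at h3
      exact hn00 h3
    | coe w => exact ⟨w, rfl⟩
  have hv0 : v ≠ 0 := by
    intro h
    rw [h] at hv_eq
    have h2 : τ (OnePoint.some n0) = τ OnePoint.infty := by rw [hv_eq, hτi]
    exact Option.some_ne_none _ (τ.injective h2)
  have hNval : ∀ z : ZMod p, z ≠ 0 → ¬ IsSquare z →
      τ (OnePoint.some z) = OnePoint.some ((z * n0⁻¹)⁻¹ * v) := by
    intro z hz hns
    have hs0 : z * n0⁻¹ ≠ 0 := mul_ne_zero hz (inv_ne_zero hn00)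
    have hssq : IsSquare (z * n0⁻¹) := nonsq_div_sq hp2 hz hns hn00 hn0ns
    have h1 := hval (z * n0⁻¹) hs0 hssq n0 v hv_eq
    rw [show z * n0⁻¹ * n0 = z by field_simp] at h1
    exact h1
  by_cases hu_sq : IsSquare u
  · -- good case
    have hinvsq : IsSquare (u⁻¹ : ZMod p) := by
      obtain ⟨r, hr⟩ := hu_sq
      exact ⟨r⁻¹, by rw [hr, mul_inv]⟩
    refine ⟨pmul p u⁻¹ (inv_ne_zero hu0) * τ, u⁻¹ * v * n0,
      mul_ne_zero (mul_ne_zero (inv_ne_zero hu0) hv0) hn00,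
      G.mul_mem (hpmulmem _ _ hinvsq) hτG, ?_, ?_, ?_, ?_⟩
    · rw [Equiv.Perm.mul_apply, hτ0, pmul_infty]
    · rw [Equiv.Perm.mul_apply, hτi, pmul_some, mul_zero]
    · rintro z ⟨hz0, hzsq⟩
      rw [Equiv.Perm.mul_apply, hRval z hz0 hzsq, pmul_some, OnePoint.some_eq_iff]
      field_simp
    · rintro z ⟨hz0, hzns⟩
      rw [Equiv.Perm.mul_apply, hNval z hz0 hzns, pmul_some, OnePoint.some_eq_iff]
      field_simp
  · -- contradiction case
    exfalso
    have hall : ∀ z : ZMod p, z ≠ 0 → τ (OnePoint.some z) = OnePoint.some (u * z⁻¹) := by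
      intro z hz
      by_cases hzsq : IsSquare z
      · rw [hRval z hz hzsq, OnePoint.some_eq_iff]
        ring
      · have hssq := nonsq_div_sq hp2 hz hzsq hu0 hu_sq
        have hs0 : z * u⁻¹ ≠ 0 := mul_ne_zero hz (inv_ne_zero hu0)
        have h1 := hval _ hs0 hssq u 1 hτu
        rw [show z * u⁻¹ * u = z by field_simp] at h1
        rw [h1, OnePoint.some_eq_iff, mul_one]
        field_simp
    set η := τ * ptrans p (-u) * τ * ptrans p 1 * τ with hη
    have hηG : η ∈ G :=
      G.mul_mem (G.mul_mem (G.mul_mem (G.mul_mem hτG (htransl (-u))) hτG) (htransl 1)) hτG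
    have hone : (1 : ZMod p) ≠ 0 := one_ne_zero
    have hηfix : η OnePoint.infty = OnePoint.infty := by
      rw [hη]
      simp only [Equiv.Perm.mul_apply]
      rw [hτi, ptrans_some, zero_add, hall 1 hone, ptrans_some]
      rw [show u * 1⁻¹ + -u = 0 by simp, hτ0]
    obtain ⟨c, b, hc0, hform⟩ := affine_of_fix hp2 hp1 htransl hGfixcard hηG hηfix
    have hcsq : IsSquare c := hstruct.1 η hηG hηfix c b hform
    have hηval : ∀ z : ZMod p, z ≠ 0 → z + u ≠ 0 →
        η (OnePoint.some z) = OnePoint.some (-1 - u⁻¹ * z) := by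
      intro z hz hzu
      have hzu' : u + z ≠ 0 := by rwa [add_comm] at hzu
      have w1 : u * z⁻¹ + 1 ≠ 0 := by
        have e1 : u * z⁻¹ + 1 = (u + z) * z⁻¹ := by field_simp
        rw [e1]
        exact mul_ne_zero hzu' (inv_ne_zero hz)
      have e2 : u * (u * z⁻¹ + 1)⁻¹ + -u = -(u * u) * (z + u)⁻¹ := by
        field_simp
        ring
      have w2 : u * (u * z⁻¹ + 1)⁻¹ + -u ≠ 0 := by
        rw [e2]
        exact mul_ne_zero (neg_ne_zero.mpr (mul_ne_zero hu0 hu0)) (inv_ne_zero hzu)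
      have hchain : η (OnePoint.some z)
          = τ (ptrans p (-u) (τ (ptrans p 1 (τ (OnePoint.some z))))) := by
        rw [hη]; simp only [Equiv.Perm.mul_apply]
      rw [hchain, hall z hz, ptrans_some, hall _ w1, ptrans_some, hall _ w2,
        OnePoint.some_eq_iff]
      rw [e2]
      field_simp
      ring
    -- pick two sample points
    have h2ne : (2 : ZMod p) ≠ 0 := two_ne_zero_zmod hp2
    have h3ne : (3 : ZMod p) ≠ 0 := by
      intro h
      have h3 : ((3 : ℕ) : ZMod p) = 0 := by push_cast; exact h
      rw [ZMod.natCast_eq_zero_iff] at h3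
      have h4 := Nat.le_of_dvd (by norm_num) h3
      have h5 := (Fact.out : p.Prime).two_le
      have h6 : 5 ≤ p := by omega
      omega
    have h12 : (1 : ZMod p) ≠ 2 := by
      intro h
      apply h2ne
      linear_combination -2 * h
    have h13 : (1 : ZMod p) ≠ 3 := by
      intro h
      apply h2ne
      linear_combination -h
    have h23 : (2 : ZMod p) ≠ 3 := by
      intro h
      apply one_ne_zero (α := ZMod p)
      linear_combination -h
    obtain ⟨z1, z2, hz1, hz2, hz12, hz1u, hz2u⟩ :
        ∃ z1 z2 : ZMod p, z1 ≠ 0 ∧ z2 ≠ 0 ∧ z1 ≠ z2 ∧ z1 + u ≠ 0 ∧ z2 + u ≠ 0 := by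
      by_cases hA : (1 : ZMod p) + u = 0
      · refine ⟨2, 3, h2ne, h3ne, h23, ?_, ?_⟩
        · intro h
          apply h12
          linear_combination hA - h
        · intro h
          apply h13
          linear_combination hA - h
      · by_cases hB : (2 : ZMod p) + u = 0
        · refine ⟨1, 3, one_ne_zero, h3ne, h13, hA, ?_⟩
          intro h
          apply h13
          linear_combination 2 * hB - 2 * h
        · exact ⟨1, 2, one_ne_zero, h2ne, h12, hA, hB⟩
    have e1 : c * z1 + b = -1 - u⁻¹ * z1 := by
      have := (hform z1).symm.trans (hηval z1 hz1 hz1u)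
      rwa [OnePoint.some_eq_iff] at this
    have e2 : c * z2 + b = -1 - u⁻¹ * z2 := by
      have := (hform z2).symm.trans (hηval z2 hz2 hz2u)
      rwa [OnePoint.some_eq_iff] at this
    have hceq : c = -u⁻¹ := by
      have h5 : (c + u⁻¹) * (z1 - z2) = 0 := by linear_combination e1 - e2
      rcases mul_eq_zero.mp h5 with h | h
      · linear_combination h
      · exact absurd (by linear_combination h : z1 = z2) hz12
    apply hu_sq
    have h6 : IsSquare (u⁻¹ : ZMod p) := by
      have h7 : (u⁻¹ : ZMod p) = (-1) * c := by rw [hceq]; ring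
      rw [h7]
      exact (neg_one_sq_zmod hp2 hp1).mul hcsq
    obtain ⟨r, hr⟩ := h6
    refine ⟨r⁻¹, ?_⟩
    have h8 : u = (r * r)⁻¹ := by rw [← hr, inv_inv]
    rw [h8, mul_inv]
end ELI

theorem exists_lambda_inverting
    (p : ℕ) [Fact p.Prime] (hp2 : p ≠ 2) (hp1 : p % 4 = 1)
    (G : Subgroup (Equiv.Perm (OnePoint (ZMod p))))
    (htrans : ∀ x y : OnePoint (ZMod p), ∃ g ∈ G, g x = y)
    (hcard : Nat.card G = (p ^ 3 - p) / 2)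
    (htransl : ∀ a : ZMod p, ptrans p a ∈ G) :
    ∃ lam : Equiv.Perm (OnePoint (ZMod p)), ∃ c : ZMod p, c ≠ 0 ∧
      lam ∈ G ∧ lam (OnePoint.some (0 : ZMod p)) = OnePoint.infty ∧
      lam OnePoint.infty = OnePoint.some (0 : ZMod p) ∧
      (∀ z ∈ Rset p, lam (OnePoint.some z) = OnePoint.some z⁻¹) ∧
      (∀ z ∈ Nset p, lam (OnePoint.some z) = OnePoint.some (c * z⁻¹)) :=
  ELI.main hp2 hp1 htrans hcard htransl
end

section
/- Assume p ≡ 1 (mod 4). Then the map z ↦ −1/z belongs to G. -/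
namespace NegInvAux

variable (p : ℕ) [Fact p.Prime]

theorem ptrans_some (a z : ZMod p) : ptrans p a (Option.some z) = Option.some (z + a) := rfl

theorem ptrans_none (a : ZMod p) : ptrans p a Option.none = Option.none := rfl

theorem ptrans_mul (a b : ZMod p) : ptrans p a * ptrans p b = ptrans p (a + b) := by
  apply Equiv.ext; intro x
  rcases x with _ | z
  · rfl
  · show Option.some _ = Option.some _
    simp [ptrans]; ring

theorem ptrans_zero : ptrans p 0 = 1 := by
  apply Equiv.ext; intro x
  rcases x with _ | z
  · rfl
  · show Option.some _ = Option.some _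
    simp [ptrans]

theorem ptrans_inv (a : ZMod p) : (ptrans p a)⁻¹ = ptrans p (-a) := by
  rw [eq_comm, eq_inv_iff_mul_eq_one, ptrans_mul]
  simp [ptrans_zero]

theorem ptrans_pow (n : ℕ) : (ptrans p 1) ^ n = ptrans p (n : ZMod p) := by
  induction n with
  | zero => simpa using (ptrans_zero p).symm
  | succ k ih => rw [pow_succ, ih, ptrans_mul]; push_cast; ring_nf

theorem ptrans_eq_one_iff (a : ZMod p) : ptrans p a = 1 ↔ a = 0 := by
  constructor
  · intro h
    have := Equiv.ext_iff.1 h (Option.some 0)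
    rw [ptrans_some] at this
    have h2 : (Option.some (0 + a) : Option (ZMod p)) = Option.some 0 := this
    injection h2 with h3
    simpa using h3
  · rintro rfl; exact ptrans_zero p

theorem orderOf_ptrans_one : orderOf (ptrans p 1) = p := by
  refine orderOf_eq_prime ?_ ?_
  · rw [ptrans_pow]; simp [ptrans_zero]
  · rw [Ne, ptrans_eq_one_iff]
    exact one_ne_zero

theorem pmul_some (a : ZMod p) (ha : a ≠ 0) (z : ZMod p) :
    pmul p a ha (Option.some z) = Option.some (a * z) := rfl

theorem pmul_none (a : ZMod p) (ha : a ≠ 0) : pmul p a ha Option.none = Option.none := rfl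

theorem pmul_mul (a b : ZMod p) (ha : a ≠ 0) (hb : b ≠ 0) (hab : a * b ≠ 0) :
    pmul p a ha * pmul p b hb = pmul p (a * b) hab := by
  apply Equiv.ext; intro x
  rcases x with _ | z
  · rfl
  · show Option.some _ = Option.some _
    simp [pmul]; ring

theorem pmul_one : pmul p 1 one_ne_zero = 1 := by
  apply Equiv.ext; intro x
  rcases x with _ | z
  · rfl
  · show Option.some _ = Option.some _
    simp [pmul]

theorem pmul_inv (a : ZMod p) (ha : a ≠ 0) :
    (pmul p a ha)⁻¹ = pmul p a⁻¹ (inv_ne_zero ha) := by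
  symm
  apply eq_inv_of_mul_eq_one_left
  apply Equiv.ext; intro x
  rcases x with _ | z
  · rfl
  · show Option.some _ = Option.some _
    simp [pmul]
    field_simp

theorem cardX : Nat.card (OnePoint (ZMod p)) = p + 1 := by
  simp [OnePoint, Nat.card_eq_fintype_card, ZMod.card]

end NegInvAux

namespace NegInvAux

open MulAction

variable (p : ℕ) [Fact p.Prime] (G : Subgroup (Equiv.Perm (OnePoint (ZMod p))))

/-- The subgroup of elements of `G` fixing `∞`. -/
def Kgrp : Subgroup (Equiv.Perm (OnePoint (ZMod p))) where
  carrier := {g | g ∈ G ∧ g Option.none = Option.none}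
  one_mem' := ⟨G.one_mem, rfl⟩
  mul_mem' := by
    rintro a b ⟨haG, ha⟩ ⟨hbG, hb⟩
    exact ⟨G.mul_mem haG hbG, by erw [Equiv.Perm.mul_apply, hb, ha]⟩
  inv_mem' := by
    rintro a ⟨haG, ha⟩
    refine ⟨G.inv_mem haG, ?_⟩
    conv_lhs => rw [← ha]
    exact Equiv.symm_apply_apply a _

theorem mem_Kgrp (g : Equiv.Perm (OnePoint (ZMod p))) :
    g ∈ Kgrp p G ↔ g ∈ G ∧ g Option.none = Option.none := Iff.rfl

variable {p G}

theorem card_Kgrp (hp2 : p ≠ 2)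
    (htrans : ∀ x y : OnePoint (ZMod p), ∃ g ∈ G, g x = y)
    (hcard : Nat.card G = (p ^ 3 - p) / 2) :
    Nat.card (Kgrp p G) = p * ((p - 1) / 2) := by
  classical
  have hp : p.Prime := Fact.out
  obtain ⟨k, hk⟩ := hp.odd_of_ne_two hp2
  have hk2 : (p - 1) / 2 = k := by omega
  letI : Fintype ↥G := Fintype.ofFinite _
  letI : Fintype (orbit ↥G (OnePoint.infty : OnePoint (ZMod p))) := Fintype.ofFinite _
  letI : Fintype (stabilizer ↥G (OnePoint.infty : OnePoint (ZMod p))) := Fintype.ofFinite _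
  have hos := MulAction.card_orbit_mul_card_stabilizer_eq_card_group ↥G
    (OnePoint.infty : OnePoint (ZMod p))
  have horb : (orbit ↥G (OnePoint.infty : OnePoint (ZMod p))) = Set.univ := by
    ext y
    simp only [Set.mem_univ, iff_true]
    obtain ⟨g, hg, hgy⟩ := htrans OnePoint.infty y
    exact ⟨⟨g, hg⟩, hgy⟩
  have hcorb : Fintype.card (orbit ↥G (OnePoint.infty : OnePoint (ZMod p))) = p + 1 := by
    rw [← Nat.card_eq_fintype_card, horb, Nat.card_congr (Equiv.Set.univ _)]
    exact cardX p
  have hstabK : Nat.card (stabilizer ↥G (OnePoint.infty : OnePoint (ZMod p)))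
      = Nat.card (Kgrp p G) := by
    apply Nat.card_congr
    exact { toFun := fun s => ⟨s.1.1, s.1.2, s.2⟩
            invFun := fun g => ⟨⟨g.1, g.2.1⟩, g.2.2⟩
            left_inv := fun s => rfl
            right_inv := fun g => rfl }
  have hG : Nat.card ↥G = (p + 1) * (p * k) := by
    rw [hcard]
    have h1 : p ^ 3 - p = (p + 1) * (p * k) * 2 := by
      have hle : p ≤ p ^ 3 := Nat.le_self_pow (by norm_num) p
      zify [hle]
      subst hk
      push_cast
      ring
    rw [h1, Nat.mul_div_cancel _ (by norm_num)]
  have hmain : (p + 1) * Nat.card (stabilizer ↥G (OnePoint.infty : OnePoint (ZMod p)))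
      = (p + 1) * (p * k) :=
    calc (p + 1) * Nat.card (stabilizer ↥G (OnePoint.infty : OnePoint (ZMod p)))
        = Fintype.card (orbit ↥G (OnePoint.infty : OnePoint (ZMod p)))
          * Fintype.card (stabilizer ↥G (OnePoint.infty : OnePoint (ZMod p))) := by
          rw [hcorb, Nat.card_eq_fintype_card]
      _ = Fintype.card ↥G := hos
      _ = (p + 1) * (p * k) := by rw [← Nat.card_eq_fintype_card, hG]
  rw [hk2, ← hstabK]
  exact Nat.eq_of_mul_eq_mul_left (by omega) hmain

theorem affine_mem (hp2 : p ≠ 2)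
    (htrans : ∀ x y : OnePoint (ZMod p), ∃ g ∈ G, g x = y)
    (hcard : Nat.card G = (p ^ 3 - p) / 2)
    (htransl : ∀ a : ZMod p, ptrans p a ∈ G)
    (g : Equiv.Perm (OnePoint (ZMod p))) (hg : g ∈ G)
    (hfix : g Option.none = Option.none) :
    ∃ (c d : ZMod p) (hc : c ≠ 0), g = ptrans p d * pmul p c hc := by
  classical
  have hp : p.Prime := Fact.out
  obtain ⟨k, hk⟩ := hp.odd_of_ne_two hp2
  have hK : Nat.card (Kgrp p G) = p * k := by
    rw [card_Kgrp hp2 htrans hcard]; congr 1; omega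
  have hk0 : k ≠ 0 := by
    rintro rfl
    have := hp.two_le; omega
  have hkp : k < p := by omega
  -- the translation subgroup as a Sylow p-subgroup of Kgrp
  have hτK : ptrans p 1 ∈ Kgrp p G := ⟨htransl 1, rfl⟩
  set τ : ↥(Kgrp p G) := ⟨ptrans p 1, hτK⟩ with hτ
  have hordτ : orderOf τ = p := by
    rw [hτ, Subgroup.orderOf_mk]
    exact orderOf_ptrans_one p
  have hcardT : Nat.card (Subgroup.zpowers τ) = p := by
    rw [Nat.card_zpowers]; exact hordτ
  have hfact : (Nat.card ↥(Kgrp p G)).factorization p = 1 := by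
    rw [hK, Nat.factorization_mul hp.ne_zero hk0]
    have h1 : (Nat.factorization p) p = 1 := by
      rw [hp.factorization]; simp
    have h2 : (Nat.factorization k) p = 0 :=
      Nat.factorization_eq_zero_of_not_dvd (fun hd => absurd (Nat.le_of_dvd (by omega) hd) (by omega))
    simp [h1, h2]
  have hcardT' : Nat.card (Subgroup.zpowers τ) = p ^ (Nat.card ↥(Kgrp p G)).factorization p := by
    rw [hfact, pow_one]; exact hcardT
  set P : Sylow p ↥(Kgrp p G) := Sylow.ofCard (Subgroup.zpowers τ) hcardT' with hP
  have hPcoe : (P : Subgroup ↥(Kgrp p G)) = Subgroup.zpowers τ := Sylow.coe_ofCard _ _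
  -- the number of Sylow subgroups is 1
  have hidx : (P : Subgroup ↥(Kgrp p G)).index = k := by
    have h1 := Subgroup.card_mul_index (P : Subgroup ↥(Kgrp p G))
    rw [hPcoe] at h1 ⊢
    rw [hcardT, hK] at h1
    exact Nat.eq_of_mul_eq_mul_left hp.pos h1
  have hn1 : Nat.card (Sylow p ↥(Kgrp p G)) = 1 := by
    have hdvd : Nat.card (Sylow p ↥(Kgrp p G)) ∣ k := hidx ▸ P.card_dvd_index
    have hmod : Nat.card (Sylow p ↥(Kgrp p G)) ≡ 1 [MOD p] := card_sylow_modEq_one p _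
    have hle := Nat.le_of_dvd (by omega) hdvd
    have h2 : Nat.card (Sylow p ↥(Kgrp p G)) % p = 1 % p := hmod
    rw [Nat.mod_eq_of_lt hp.one_lt, Nat.mod_eq_of_lt (lt_of_le_of_lt hle hkp)] at h2
    exact h2
  have hss : Subsingleton (Sylow p ↥(Kgrp p G)) :=
    (Nat.card_eq_one_iff_unique.mp hn1).1
  have hnormal : (P : Subgroup ↥(Kgrp p G)).Normal := by
    rw [← Subgroup.normalizer_eq_top_iff, eq_top_iff]
    intro x _
    exact Sylow.smul_eq_iff_mem_normalizer.mp (Subsingleton.elim _ _)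
  -- conjugation: g ∘ ptrans 1 ∘ g⁻¹ is a power of ptrans 1
  set gk : ↥(Kgrp p G) := ⟨g, hg, hfix⟩ with hgk
  have hτP : τ ∈ (P : Subgroup ↥(Kgrp p G)) := by
    rw [hPcoe]; exact Subgroup.mem_zpowers τ
  have hconj : gk * τ * gk⁻¹ ∈ Subgroup.zpowers τ := by
    rw [← hPcoe]; exact hnormal.conj_mem τ hτP gk
  obtain ⟨n, hn⟩ := Submonoid.mem_powers_iff _ _ |>.mp (mem_powers_iff_mem_zpowers.mpr hconj)
  have hnperm : g * ptrans p 1 * g⁻¹ = ptrans p (n : ZMod p) := by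
    have h2 : ((gk * τ * gk⁻¹ : ↥(Kgrp p G)) : Equiv.Perm (OnePoint (ZMod p)))
        = (ptrans p 1) ^ n := by
      rw [← hn, SubmonoidClass.coe_pow]
    have h3 : g * ptrans p 1 * g⁻¹ = (ptrans p 1) ^ n := h2
    rw [ptrans_pow] at h3
    exact h3
  set c : ZMod p := (n : ZMod p) with hc
  have heq : g * ptrans p 1 = ptrans p c * g := by
    rw [← hnperm]; group
  -- pointwise form
  set u : ZMod p → ZMod p := fun z => (g (Option.some z)).getD 0 with hu
  have hgu : ∀ z : ZMod p, g (Option.some z) = Option.some (u z) := by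
    intro z
    rcases hsome : g (Option.some z) with _ | y
    · exfalso
      have : (Option.some z : OnePoint (ZMod p)) = Option.none := g.injective (by rw [hsome, hfix])
      exact Option.some_ne_none _ this
    · rw [hu]; simp [hsome]; rfl
  have hustep : ∀ z : ZMod p, u (z + 1) = u z + c := by
    intro z
    have h1 : (g * ptrans p 1) (Option.some z) = (ptrans p c * g) (Option.some z) := by rw [heq]
    change g (ptrans p 1 (Option.some z)) = ptrans p c (g (Option.some z)) at h1
    erw [ptrans_some, hgu, hgu, ptrans_some] at h1
    have h2 : (Option.some (u (z+1)) : Option (ZMod p)) = Option.some (u z + c) := h1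
    injection h2
  have hunat : ∀ m : ℕ, u ((m : ZMod p)) = u 0 + m * c := by
    intro m
    induction m with
    | zero => simp
    | succ j ih =>
      push_cast
      rw [hustep ((j : ZMod p)), ih]
      push_cast
      ring
  have huz : ∀ z : ZMod p, u z = u 0 + z * c := by
    intro z
    have hz : ((z.val : ℕ) : ZMod p) = z := by simp [ZMod.natCast_val, ZMod.cast_id]
    calc u z = u ((z.val : ℕ) : ZMod p) := by rw [hz]
    _ = u 0 + (z.val : ℕ) * c := hunat z.val
    _ = u 0 + z * c := by rw [hz]
  have hc0 : c ≠ 0 := by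
    intro h0
    have h1 : u 1 = u 0 := by rw [huz 1, h0]; ring
    have h2 : (Option.some (1 : ZMod p) : OnePoint (ZMod p)) = Option.some (0 : ZMod p) :=
      g.injective (by rw [hgu, hgu, h1])
    have h3 : (Option.some (1 : ZMod p) : Option (ZMod p)) = Option.some (0 : ZMod p) := h2
    injection h3 with h4
    exact one_ne_zero h4
  refine ⟨c, u 0, hc0, ?_⟩
  apply Equiv.ext
  intro x
  rcases x with _ | z
  · erw [hfix, Equiv.Perm.mul_apply, pmul_none p c hc0]
  · erw [hgu, Equiv.Perm.mul_apply, pmul_some, ptrans_some, huz]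
    congr 1
    ring

end NegInvAux

namespace NegInvAux

variable (p : ℕ) [Fact p.Prime] (G : Subgroup (Equiv.Perm (OnePoint (ZMod p))))

theorem neg_one_ne_zero'' : (-1 : ZMod p) ≠ 0 := by
  intro h
  have hp : p.Prime := Fact.out
  haveI : Fact (1 < p) := ⟨hp.one_lt⟩
  exact one_ne_zero (neg_eq_zero.mp h)

theorem pmul_congr (a b : ZMod p) (ha : a ≠ 0) (hb : b ≠ 0) (h : a = b) :
    pmul p a ha = pmul p b hb := by subst h; rfl

/-- The subgroup of slopes realized in `G`. -/
def Cgrp : Subgroup ((ZMod p)ˣ) where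
  carrier := {c | pmul p (c : ZMod p) c.ne_zero ∈ G}
  one_mem' := by
    have h1 : pmul p ((1 : (ZMod p)ˣ) : ZMod p) (Units.ne_zero 1) = 1 := pmul_one p
    simp only [Set.mem_setOf_eq, h1]
    exact G.one_mem
  mul_mem' := by
    intro a b ha hb
    simp only [Set.mem_setOf_eq] at *
    have h1 : pmul p ((a * b : (ZMod p)ˣ) : ZMod p) (Units.ne_zero _)
        = pmul p (a : ZMod p) a.ne_zero * pmul p (b : ZMod p) b.ne_zero := by
      rw [pmul_mul p _ _ a.ne_zero b.ne_zero (mul_ne_zero a.ne_zero b.ne_zero)]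
      exact pmul_congr p _ _ _ _ (Units.val_mul a b)
    rw [h1]
    exact G.mul_mem ha hb
  inv_mem' := by
    intro a ha
    simp only [Set.mem_setOf_eq] at *
    have h1 : pmul p ((a⁻¹ : (ZMod p)ˣ) : ZMod p) (Units.ne_zero _)
        = (pmul p (a : ZMod p) a.ne_zero)⁻¹ := by
      rw [pmul_inv]
      exact pmul_congr p _ _ _ _ (by rw [Units.val_inv_eq_inv_val])
    rw [h1]
    exact G.inv_mem ha

theorem mem_Cgrp (c : (ZMod p)ˣ) :
    c ∈ Cgrp p G ↔ pmul p (c : ZMod p) c.ne_zero ∈ G := Iff.rfl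

variable {p G}

theorem card_Cgrp (hp2 : p ≠ 2)
    (htrans : ∀ x y : OnePoint (ZMod p), ∃ g ∈ G, g x = y)
    (hcard : Nat.card G = (p ^ 3 - p) / 2)
    (htransl : ∀ a : ZMod p, ptrans p a ∈ G) :
    Nat.card (Cgrp p G) = (p - 1) / 2 := by
  classical
  have hp : p.Prime := Fact.out
  have e : ZMod p × ↥(Cgrp p G) ≃ ↥(Kgrp p G) := by
    apply Equiv.ofBijective
      (fun x => (⟨ptrans p x.1 * pmul p (x.2.1 : ZMod p) x.2.1.ne_zero,
        G.mul_mem (htransl x.1) x.2.2, rfl⟩ : ↥(Kgrp p G)))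
    constructor
    · rintro ⟨d, c⟩ ⟨d', c'⟩ hdc
      have h0 := congrArg (fun (g : ↥(Kgrp p G)) => (g : Equiv.Perm (OnePoint (ZMod p)))
        (Option.some (0 : ZMod p))) hdc
      have h1 := congrArg (fun (g : ↥(Kgrp p G)) => (g : Equiv.Perm (OnePoint (ZMod p)))
        (Option.some (1 : ZMod p))) hdc
      have h0a : (Option.some (((c : (ZMod p)ˣ) : ZMod p) * 0 + d) : Option (ZMod p))
          = Option.some (((c' : (ZMod p)ˣ) : ZMod p) * 0 + d') := h0
      have h1a : (Option.some (((c : (ZMod p)ˣ) : ZMod p) * 1 + d) : Option (ZMod p))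
          = Option.some (((c' : (ZMod p)ˣ) : ZMod p) * 1 + d') := h1
      simp only [mul_zero, mul_one] at h0a h1a
      have h0' : (Option.some ((0 : ZMod p) + d) : Option (ZMod p)) = Option.some (0 + d') := h0a
      have h1' : (Option.some (((c : (ZMod p)ˣ) : ZMod p) + d) : Option (ZMod p))
          = Option.some (((c' : (ZMod p)ˣ) : ZMod p) + d') := h1a
      injection h0' with h0''
      injection h1' with h1''
      simp only [zero_add] at h0''
      subst h0''
      have : ((c : (ZMod p)ˣ) : ZMod p) = ((c' : (ZMod p)ˣ) : ZMod p) := by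
        have := add_right_cancel h1''; exact_mod_cast this
      have : (c : (ZMod p)ˣ) = (c' : (ZMod p)ˣ) := Units.ext this
      simp [Prod.ext_iff, Subtype.ext_iff, this]
    · rintro ⟨g, hgG, hgfix⟩
      obtain ⟨c, d, hc, hcd⟩ := affine_mem hp2 htrans hcard htransl g hgG hgfix
      have hμG : pmul p c hc ∈ G := by
        have h2 : pmul p c hc = (ptrans p d)⁻¹ * g := by rw [hcd]; group
        rw [h2]
        exact G.mul_mem (G.inv_mem (htransl d)) hgG
      refine ⟨⟨d, ⟨Units.mk0 c hc, ?_⟩⟩, ?_⟩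
      · show pmul p ((Units.mk0 c hc : (ZMod p)ˣ) : ZMod p) _ ∈ G
        have : pmul p ((Units.mk0 c hc : (ZMod p)ˣ) : ZMod p) (Units.ne_zero _)
            = pmul p c hc := pmul_congr p _ _ _ _ rfl
        rw [this]; exact hμG
      · apply Subtype.ext
        show ptrans p d * pmul p _ _ = g
        rw [hcd]
        rfl
  have hcards : Nat.card (ZMod p × ↥(Cgrp p G)) = Nat.card (Kgrp p G) := Nat.card_congr e
  rw [Nat.card_prod, Nat.card_zmod, card_Kgrp hp2 htrans hcard] at hcards
  exact Nat.eq_of_mul_eq_mul_left hp.pos hcards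

theorem pmul_neg_one_mem (hp2 : p ≠ 2) (hp1 : p % 4 = 1)
    (htrans : ∀ x y : OnePoint (ZMod p), ∃ g ∈ G, g x = y)
    (hcard : Nat.card G = (p ^ 3 - p) / 2)
    (htransl : ∀ a : ZMod p, ptrans p a ∈ G) :
    pmul p (-1 : ZMod p) (neg_one_ne_zero'' p) ∈ G := by
  classical
  have hp : p.Prime := Fact.out
  have h2 : (2 : ℕ) ∣ Nat.card (Cgrp p G) := by
    rw [card_Cgrp hp2 htrans hcard htransl]
    omega
  letI : Fintype ↥(Cgrp p G) := Fintype.ofFinite _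
  rw [Nat.card_eq_fintype_card] at h2
  obtain ⟨x, hx⟩ := exists_prime_orderOf_dvd_card 2 h2
  have hx2 : orderOf ((x : (ZMod p)ˣ)) = 2 := by
    rw [Subgroup.orderOf_coe]; exact hx
  have hu1 : (x : (ZMod p)ˣ) * (x : (ZMod p)ˣ) = 1 := by
    rw [← sq, ← hx2]; exact pow_orderOf_eq_one _
  have huv : ((x : (ZMod p)ˣ) : ZMod p) * ((x : (ZMod p)ˣ) : ZMod p) = 1 := by
    have := congrArg (Units.val) hu1
    simpa using this
  have hval : ((x : (ZMod p)ˣ) : ZMod p) = -1 := by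
    rcases mul_self_eq_one_iff.mp huv with h | h
    · exfalso
      have : (x : (ZMod p)ˣ) = 1 := Units.ext (by rw [h]; rfl)
      rw [this] at hx2
      simp at hx2
    · exact h
  have hmem : pmul p ((x : (ZMod p)ˣ) : ZMod p) (Units.ne_zero _) ∈ G :=
    (mem_Cgrp p G (x : (ZMod p)ˣ)).mp x.2
  rwa [pmul_congr p _ _ (Units.ne_zero _) (neg_one_ne_zero'' p) hval] at hmem

end NegInvAux

theorem negInv_mem_of_one_mod_four
    (p : ℕ) [Fact p.Prime] (hp2 : p ≠ 2) (hp1 : p % 4 = 1)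
    (G : Subgroup (Equiv.Perm (OnePoint (ZMod p))))
    (htrans : ∀ x y : OnePoint (ZMod p), ∃ g ∈ G, g x = y)
    (hcard : Nat.card G = (p ^ 3 - p) / 2)
    (htransl : ∀ a : ZMod p, ptrans p a ∈ G) :
    negInvPerm p ∈ G := by
  classical
  have hp : p.Prime := Fact.out
  have haff := fun g hg hfix => NegInvAux.affine_mem (G := G) hp2 htrans hcard htransl g hg hfix
  have hμ1 := NegInvAux.pmul_neg_one_mem (G := G) hp2 hp1 htrans hcard htransl
  -- construct w swapping 0 and ∞
  obtain ⟨w0, hw0G, hw0⟩ := htrans Option.none (Option.some (0 : ZMod p))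
  have ha' : ∃ a : ZMod p, w0⁻¹ Option.none = Option.some a := by
    rcases h : w0⁻¹ (Option.none : OnePoint (ZMod p)) with _ | a
    · exfalso
      have h2 : (Option.none : OnePoint (ZMod p)) = w0 Option.none := by
        conv_lhs => rw [← (show w0 (w0⁻¹ Option.none) = Option.none from Equiv.apply_symm_apply w0 _), h]
      rw [hw0] at h2
      exact Option.some_ne_none _ h2.symm
    · exact ⟨a, rfl⟩
  obtain ⟨a, ha⟩ := ha'
  set w : Equiv.Perm (OnePoint (ZMod p)) := w0 * ptrans p a with hwdef
  have hwG : w ∈ G := G.mul_mem hw0G (htransl a)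
  have hwinfty : w Option.none = Option.some 0 := by
    erw [hwdef, Equiv.Perm.mul_apply, NegInvAux.ptrans_none, hw0]
  have hwzero : w (Option.some 0) = Option.none := by
    erw [hwdef, Equiv.Perm.mul_apply, NegInvAux.ptrans_some, zero_add, ← ha,
      Equiv.apply_symm_apply]
  have hwinv0 : w⁻¹ Option.none = Option.some 0 := by
    rw [← hwzero]; exact Equiv.symm_apply_apply w _
  have hwinvinf : w⁻¹ (Option.some 0) = Option.none := by
    rw [← hwinfty]; exact Equiv.symm_apply_apply w _
  -- the function f
  set f : ZMod p → ZMod p := fun z => (w (Option.some z)).getD 0 with hfdef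
  have hfs : ∀ z : ZMod p, z ≠ 0 → w (Option.some z) = Option.some (f z) := by
    intro z hz
    rcases h : w (Option.some z) with _ | y
    · exfalso
      have : (Option.some z : OnePoint (ZMod p)) = Option.some 0 :=
        w.injective (by rw [h, hwzero])
      have h2 : (Option.some z : Option (ZMod p)) = Option.some 0 := this
      injection h2 with h3
      exact hz h3
    · rw [hfdef]; simp [h]; rfl
  have hf0 : ∀ z : ZMod p, z ≠ 0 → f z ≠ 0 := by
    intro z hz h0
    have h1 : w (Option.some z) = Option.some 0 := by rw [hfs z hz, h0]
    have : (Option.some z : OnePoint (ZMod p)) = Option.none :=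
      w.injective (by rw [h1, hwinfty])
    exact Option.some_ne_none _ this
  have hfinj : ∀ z z' : ZMod p, z ≠ 0 → z' ≠ 0 → f z = f z' → z = z' := by
    intro z z' hz hz' hff
    have : (Option.some z : OnePoint (ZMod p)) = Option.some z' :=
      w.injective (by rw [hfs z hz, hfs z' hz', hff])
    have h2 : (Option.some z : Option (ZMod p)) = Option.some z' := this
    injection h2
  -- oddness of f
  have hμ2 : pmul p (-1 : ZMod p) (NegInvAux.neg_one_ne_zero'' p)
      * pmul p (-1 : ZMod p) (NegInvAux.neg_one_ne_zero'' p) = 1 := by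
    rw [NegInvAux.pmul_mul p _ _ _ _ (mul_ne_zero (NegInvAux.neg_one_ne_zero'' p)
      (NegInvAux.neg_one_ne_zero'' p))]
    rw [NegInvAux.pmul_congr p ((-1 : ZMod p) * (-1)) 1 _ one_ne_zero (by ring)]
    exact NegInvAux.pmul_one p
  have hodd : ∀ z : ZMod p, z ≠ 0 → f (-z) = - f z := by
    have h2p : (2 : ZMod p) ≠ 0 := by
      intro h
      have : ((2 : ℕ) : ZMod p) = 0 := by exact_mod_cast h
      rw [ZMod.natCast_eq_zero_iff] at this
      have h2 := (Nat.prime_dvd_prime_iff_eq hp Nat.prime_two).mp this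
      exact hp2 h2
    set μ := pmul p (-1 : ZMod p) (NegInvAux.neg_one_ne_zero'' p) with hμdef
    set h : Equiv.Perm (OnePoint (ZMod p)) := w * μ * w⁻¹ with hhdef
    have hhG : h ∈ G := G.mul_mem (G.mul_mem hwG hμ1) (G.inv_mem hwG)
    have hhfix : h Option.none = Option.none := by
      erw [hhdef, Equiv.Perm.mul_apply, Equiv.Perm.mul_apply, hwinv0, hμdef,
        NegInvAux.pmul_some, mul_zero, hwzero]
    obtain ⟨c, d, hc, hcd⟩ := haff h hhG hhfix
    have hd : d = 0 := by
      have h1 : h (Option.some 0) = Option.some 0 := by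
        erw [hhdef, Equiv.Perm.mul_apply, Equiv.Perm.mul_apply, hwinvinf, hμdef,
          NegInvAux.pmul_none, hwinfty]
      erw [hcd, Equiv.Perm.mul_apply, NegInvAux.pmul_some, NegInvAux.ptrans_some, mul_zero,
        zero_add] at h1
      have h2 : (Option.some d : Option (ZMod p)) = Option.some 0 := h1
      injection h2
    subst hd
    have hsq : h * h = 1 := by
      rw [hhdef, show w * μ * w⁻¹ * (w * μ * w⁻¹) = w * (μ * μ) * w⁻¹ by group, hμ2]
      group
    have hcc : c * c = 1 := by
      rw [hcd] at hsq
      have h1 := Equiv.ext_iff.mp hsq (Option.some (1 : ZMod p))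
      rw [NegInvAux.ptrans_zero, one_mul] at h1
      change (Option.some (c * (c * 1)) : Option (ZMod p)) = Option.some 1 at h1
      rw [mul_one] at h1
      have h2 : (Option.some (c * c) : Option (ZMod p)) = Option.some 1 := h1
      injection h2
    have hcneg : c = -1 := by
      rcases mul_self_eq_one_iff.mp hcc with h1 | h1
      · exfalso
        have hh1 : h = 1 := by
          rw [hcd, NegInvAux.pmul_congr p c 1 hc one_ne_zero h1, NegInvAux.pmul_one,
            NegInvAux.ptrans_zero, one_mul]
        have hμid : μ = 1 := by
          have h3 : μ = w⁻¹ * h * w := by rw [hhdef]; group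
          rw [h3, hh1]; group
        have h4 := Equiv.ext_iff.mp hμid (Option.some (1 : ZMod p))
        rw [hμdef, NegInvAux.pmul_some, mul_one] at h4
        have h5 : (Option.some (-1 : ZMod p) : Option (ZMod p)) = Option.some 1 := h4
        injection h5 with h6
        apply h2p
        linear_combination -h6
      · exact h1
    -- now h = pmul (-1), so w ∘ μ = μ ∘ w
    have hcomm : w * μ = μ * w := by
      have h1 : h = μ := by
        rw [hcd, NegInvAux.pmul_congr p c (-1) hc (NegInvAux.neg_one_ne_zero'' p) hcneg,
          NegInvAux.ptrans_zero, one_mul, hμdef]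
      rw [hhdef] at h1
      calc w * μ = (w * μ * w⁻¹) * w := by group
      _ = μ * w := by rw [h1]
    intro z hz
    have h0 : (w * μ) (Option.some z) = (μ * w) (Option.some z) := Equiv.ext_iff.mp hcomm _
    have h1 : w (μ (Option.some z)) = μ (w (Option.some z)) := h0
    rw [hμdef, NegInvAux.pmul_some] at h1
    rw [show (-1 : ZMod p) * z = -z by ring] at h1
    rw [hfs (-z) (neg_ne_zero.mpr hz), hfs z hz, NegInvAux.pmul_some] at h1
    have h2 : (Option.some (f (-z)) : Option (ZMod p)) = Option.some (-1 * f z) := h1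
    injection h2 with h3
    rw [h3]; ring
  -- the key functional equation
  have key : ∀ a : ZMod p, a ≠ 0 → ∃ γ : ZMod p, ∃ hγ : γ ≠ 0, γ * f a = -a ∧
      pmul p γ hγ ∈ G ∧
      ∀ z : ZMod p, z ≠ 0 → z ≠ -a → f (γ * (f z + f a)) = f (z + a) + -(f a) := by
    intro a ha
    have hfa0 : f a ≠ 0 := hf0 a ha
    have hna : (-a : ZMod p) ≠ 0 := neg_ne_zero.mpr ha
    set m : Equiv.Perm (OnePoint (ZMod p)) :=
      w⁻¹ * ptrans p (-(f a)) * w * ptrans p a * w⁻¹ with hmdef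
    have hmG : m ∈ G := by
      rw [hmdef]
      exact G.mul_mem (G.mul_mem (G.mul_mem (G.mul_mem (G.inv_mem hwG)
        (htransl _)) hwG) (htransl _)) (G.inv_mem hwG)
    have hmfix : m Option.none = Option.none := by
      have h1 : m Option.none
          = w⁻¹ (ptrans p (-(f a)) (w (ptrans p a (w⁻¹ Option.none)))) := rfl
      rw [h1, hwinv0, NegInvAux.ptrans_some, zero_add, hfs a ha, NegInvAux.ptrans_some,
        add_neg_cancel, hwinvinf]
    obtain ⟨γ, δ, hγ, hmeq⟩ := haff m hmG hmfix
    -- the master pointwise identity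
    have hid : ∀ x : OnePoint (ZMod p),
        w (m (w x)) = ptrans p (-(f a)) (w (ptrans p a x)) := by
      intro x
      have hgrp : w * m * w = ptrans p (-(f a)) * w * ptrans p a := by
        rw [hmdef]; group
      have h1 : (w * m * w) x = (ptrans p (-(f a)) * w * ptrans p a) x := by rw [hgrp]
      exact h1
    have hmval : ∀ y : ZMod p, m (Option.some y) = Option.some (γ * y + δ) := by
      intro y
      rw [hmeq]
      have : (ptrans p δ * pmul p γ hγ) (Option.some y)
          = ptrans p δ (pmul p γ hγ (Option.some y)) := rfl
      rw [this, NegInvAux.pmul_some, NegInvAux.ptrans_some]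
    -- δ = -a
    have hδ : δ = -a := by
      have h1 := hid Option.none
      rw [hwinfty, hmval 0, mul_zero, zero_add] at h1
      rw [NegInvAux.ptrans_none, hwinfty, NegInvAux.ptrans_some, zero_add] at h1
      have hδ0 : δ ≠ 0 := by
        intro h0
        rw [h0, hwzero] at h1
        exact Option.some_ne_none _ h1.symm
      rw [hfs δ hδ0] at h1
      have h2 : (Option.some (f δ) : Option (ZMod p)) = Option.some (-(f a)) := h1
      injection h2 with h3
      apply hfinj δ (-a) hδ0 hna
      rw [h3, hodd a ha]
    -- γ * f a = -a
    have hγfa : γ * f a = -a := by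
      have h1 := hid (Option.some (-a))
      rw [hfs (-a) hna, hmval (f (-a)), NegInvAux.ptrans_some, neg_add_cancel, hwzero,
        NegInvAux.ptrans_none] at h1
      have h2 : (Option.some (γ * f (-a) + δ) : OnePoint (ZMod p)) = Option.some 0 :=
        w.injective (by rw [h1, hwzero])
      have h3 : (Option.some (γ * f (-a) + δ) : Option (ZMod p)) = Option.some 0 := h2
      injection h3 with h4
      rw [hodd a ha, hδ] at h4
      linear_combination -h4
    refine ⟨γ, hγ, hγfa, ?_, ?_⟩
    · have h1 : pmul p γ hγ = (ptrans p δ)⁻¹ * m := by rw [hmeq]; group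
      rw [h1]
      exact G.mul_mem (G.inv_mem (htransl δ)) hmG
    · intro z hz hza
      have hza' : z + a ≠ 0 := by
        intro h0; apply hza; linear_combination h0
      have hfzfa : f z + f a ≠ 0 := by
        intro h0
        apply hza
        apply hfinj z (-a) hz hna
        rw [hodd a ha]
        linear_combination h0
      have hs0 : γ * (f z + f a) ≠ 0 := mul_ne_zero hγ hfzfa
      have hsδ : γ * f z + δ = γ * (f z + f a) := by
        rw [hδ]
        linear_combination -hγfa
      have h1 := hid (Option.some z)
      rw [hfs z hz, hmval (f z), hsδ, hfs _ hs0, NegInvAux.ptrans_some, hfs _ hza',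
        NegInvAux.ptrans_some] at h1
      have h2 : (Option.some (f (γ * (f z + f a))) : Option (ZMod p))
          = Option.some (f (z + a) + -(f a)) := h1
      injection h2
  -- solving the functional equation
  have main : ∀ n : ℕ, 1 ≤ n → n ≤ p - 1 → ∀ a : ZMod p, a ≠ 0 →
      (n : ZMod p) * f ((n : ZMod p) * a) = f a := by
    intro n
    induction n with
    | zero => intro h; exact absurd h (by norm_num)
    | succ j ih =>
      intro _ hle c hc
      rcases Nat.eq_zero_or_pos j with hj0 | hj1
      · subst hj0
        norm_num
      · have hjle : j ≤ p - 1 := by omega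
        have hIH := ih hj1 hjle
        push_cast
        set ν : ZMod p := (j : ZMod p) with hνdef
        have hν0 : ν ≠ 0 := by
          rw [hνdef, Ne, ZMod.natCast_eq_zero_iff]
          intro hdvd
          have h2 := Nat.le_of_dvd hj1 hdvd
          have h3 := hp.two_le
          omega
        have hν1 : ν + 1 ≠ 0 := by
          have he : ((j + 1 : ℕ) : ZMod p) = ν + 1 := by rw [hνdef]; push_cast; ring
          rw [← he, Ne, ZMod.natCast_eq_zero_iff]
          intro hdvd
          have h2 := Nat.le_of_dvd (by omega) hdvd
          have h3 := hp.two_le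
          omega
        have hνν : ν * ν⁻¹ = 1 := mul_inv_cancel₀ hν0
        set a' : ZMod p := ν * c with ha'def
        have ha' : a' ≠ 0 := mul_ne_zero hν0 hc
        obtain ⟨γ, hγ, hγfa, _, hE⟩ := key a' ha'
        have hz1 : ν * a' ≠ 0 := mul_ne_zero hν0 ha'
        have hz2 : ν * a' ≠ -a' := by
          intro h0
          have h2 : (ν + 1) * a' = 0 := by linear_combination h0
          rcases mul_eq_zero.mp h2 with h | h
          · exact hν1 h
          · exact ha' h
        have h1 := hE (ν * a') hz1 hz2
        have hIHa := hIH a' ha'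
        have hfν : f (ν * a') = ν⁻¹ * f a' := by
          linear_combination ν⁻¹ * hIHa - f (ν * a') * hνν
        set b : ZMod p := (ν + 1) * a' * ν⁻¹ with hbdef
        have hb0 : b ≠ 0 := mul_ne_zero (mul_ne_zero hν1 ha') (inv_ne_zero hν0)
        have harg : γ * (f (ν * a') + f a') = -b := by
          rw [hfν, hbdef]
          linear_combination (ν⁻¹ + 1) * hγfa + a' * hνν
        rw [harg, hodd b hb0] at h1
        have hνb : ν * b = ν * a' + a' := by
          rw [hbdef]
          linear_combination ((ν + 1) * a') * hνν
        rw [← hνb] at h1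
        have hIHb := hIH b hb0
        have hcomb : f b * (ν + 1) = ν * f a' := by
          linear_combination (-ν) * h1 - hIHb
        have hbc : b = (ν + 1) * c := by
          rw [hbdef, ha'def]
          linear_combination ((ν + 1) * c) * hνν
        have hIHc := hIH c hc
        rw [hbc] at hcomb
        rw [ha'def] at hcomb
        linear_combination hcomb + hIHc
  have hfval : ∀ z : ZMod p, z ≠ 0 → f z = z⁻¹ * f 1 := by
    intro z hz
    have h1 : ((z.val : ℕ) : ZMod p) = z := by simp [ZMod.natCast_val, ZMod.cast_id]
    have hv1 : 1 ≤ z.val := by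
      rcases Nat.eq_zero_or_pos z.val with h | h
      · exfalso; apply hz; rw [← h1, h]; simp
      · exact h
    have hv2 : z.val ≤ p - 1 := by have := z.val_lt; omega
    have h2 := main z.val hv1 hv2 1 one_ne_zero
    rw [h1, mul_one] at h2
    field_simp
    linear_combination h2
  -- conclusion
  obtain ⟨γ, hγ, hγf1, hγG, _⟩ := key 1 one_ne_zero
  have hγinv : γ⁻¹ = - f 1 := by
    apply inv_eq_of_mul_eq_one_right
    linear_combination -hγf1
  have hqG : pmul p γ⁻¹ (inv_ne_zero hγ) ∈ G := by
    rw [← NegInvAux.pmul_inv p γ hγ]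
    exact G.inv_mem hγG
  have hkey : pmul p γ⁻¹ (inv_ne_zero hγ) * negInvPerm p = w := by
    apply Equiv.ext
    intro x
    rcases x with _ | z
    · have h1 : negInvPerm p Option.none = Option.some (0 : ZMod p) := rfl
      erw [Equiv.Perm.mul_apply, h1, NegInvAux.pmul_some, mul_zero, hwinfty]
    · by_cases hz : z = 0
      · subst hz
        have h1 : negInvPerm p (Option.some (0 : ZMod p)) = Option.none := by
          show negInvFun p (Option.some 0) = Option.none
          simp [negInvFun]; rfl
        erw [Equiv.Perm.mul_apply, h1, NegInvAux.pmul_none, hwzero]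
      · have h1 : negInvPerm p (Option.some z) = Option.some (-z⁻¹) := by
          show negInvFun p (Option.some z) = Option.some (-z⁻¹)
          simp [negInvFun, hz]; rfl
        erw [Equiv.Perm.mul_apply, h1, NegInvAux.pmul_some, hfs z hz]
        congr 1
        rw [hfval z hz]
        rw [show f 1 = - γ⁻¹ by rw [hγinv]; ring]
        ring
  have hfin : negInvPerm p = (pmul p γ⁻¹ (inv_ne_zero hγ))⁻¹ * w := by
    rw [← hkey]; group
  rw [hfin]
  exact G.mul_mem (G.inv_mem hqG) hwG
end
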